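/- arXiv:1310.5132 — 10 statements merged into one kernel-verified Lean document; each statement's English description precedes it below -/
import Mathlib

section
/- The r-tuple (u_0, u_{-1}, …, u_{-r+1}) is a basis of the B_r-module K_r := ker(D^r − e_1 D^{r-1} + … + (−1)^r e_r : B_r[[t]] → B_r[[t]]); that is, each u_{-i} with 0 ≤ i ≤ r−1 lies in K_r, they are linearly independent over B_r, and they span K_r over B_r. -/
def cseq {R : Type*} [CommRing R] (h : ℤ → R) (φ : ℕ → R) : ℕ → R
  | n => φ n - ∑ i ∈ (Finset.range n).attach, cseq h φ i * h ((n : ℤ) - (i : ℕ))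
  decreasing_by exact Finset.mem_range.mp i.2

lemma cseq_spec {R : Type*} [CommRing R] (h : ℤ → R) (φ : ℕ → R) (h0 : h 0 = 1) (n : ℕ) :
    ∑ i ∈ Finset.range (n + 1), cseq h φ i * h ((n : ℤ) - (i : ℕ)) = φ n := by
  rw [Finset.sum_range_succ]
  have : cseq h φ n = φ n - ∑ i ∈ (Finset.range n).attach, cseq h φ i * h ((n : ℤ) - (i : ℕ)) := by
    rw [cseq]
  rw [this, Finset.sum_attach (Finset.range n) (fun i => cseq h φ i * h ((n : ℤ) - (i : ℕ)))]
  simp [h0]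

theorem stmt_3 (r : ℕ) (hr : 1 ≤ r)
    (e : ℕ → MvPolynomial (Fin r) ℚ)
    (he0 : e 0 = 1)
    (heX : ∀ i : Fin r, e ((i : ℕ) + 1) = MvPolynomial.X i)
    (heTop : ∀ i : ℕ, r < i → e i = 0)
    (h : ℤ → MvPolynomial (Fin r) ℚ)
    (hhneg : ∀ n : ℤ, n < 0 → h n = 0)
    (hconv : ∀ n : ℤ,
      ∑ i ∈ Finset.range (r + 1),
          (-1 : MvPolynomial (Fin r) ℚ) ^ i * e i * h (n - (i : ℤ)) =
        if n = 0 then 1 else 0)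
    (u : ℤ → PowerSeries (MvPolynomial (Fin r) ℚ))
    (hu : ∀ j : ℤ, u j = PowerSeries.mk fun n : ℕ => (n.factorial : ℚ)⁻¹ • h ((n : ℤ) + j))
    (D : PowerSeries (MvPolynomial (Fin r) ℚ) → PowerSeries (MvPolynomial (Fin r) ℚ))
    (hD : ∀ ψ : PowerSeries (MvPolynomial (Fin r) ℚ), D ψ = PowerSeries.mk fun n : ℕ =>
      ((n : MvPolynomial (Fin r) ℚ) + 1) * PowerSeries.coeff (R := MvPolynomial (Fin r) ℚ) (n + 1) ψ)
    (L : PowerSeries (MvPolynomial (Fin r) ℚ) → PowerSeries (MvPolynomial (Fin r) ℚ))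
    (hL : ∀ ψ : PowerSeries (MvPolynomial (Fin r) ℚ), L ψ =
      ∑ i ∈ Finset.range (r + 1),
        PowerSeries.C (R := MvPolynomial (Fin r) ℚ) ((-1 : MvPolynomial (Fin r) ℚ) ^ i * e i) * D^[r - i] ψ) :
    (∀ i : Fin r, L (u (-((i : ℕ) : ℤ))) = 0) ∧
    (∀ c : Fin r → MvPolynomial (Fin r) ℚ,
      (∑ i : Fin r, PowerSeries.C (R := MvPolynomial (Fin r) ℚ) (c i) * u (-((i : ℕ) : ℤ))) = 0 → ∀ i, c i = 0) ∧
    (∀ ψ : PowerSeries (MvPolynomial (Fin r) ℚ), L ψ = 0 →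
      ∃ c : Fin r → MvPolynomial (Fin r) ℚ,
        ψ = ∑ i : Fin r, PowerSeries.C (R := MvPolynomial (Fin r) ℚ) (c i) * u (-((i : ℕ) : ℤ))) := by
  classical
  -- h 0 = 1
  have h0 : h 0 = 1 := by
    have H := hconv 0
    rw [if_pos rfl, Finset.sum_eq_single 0 (fun i hi hne => by
      have hz : h (-(i : ℤ)) = 0 := hhneg _ (by omega)
      simp [hz]) (by simp)] at H
    simpa [he0] using H
  have coeff_u : ∀ (j : ℤ) (n : ℕ),
      PowerSeries.coeff (R := MvPolynomial (Fin r) ℚ) n (u j) = (n.factorial : ℚ)⁻¹ • h ((n : ℤ) + j) := by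
    intro j n; rw [hu]; simp
  -- D on u
  have Du : ∀ j : ℤ, D (u j) = u (j + 1) := by
    intro j
    rw [hD]
    ext n
    rw [PowerSeries.coeff_mk, coeff_u, coeff_u, MvPolynomial.smul_eq_C_mul,
      MvPolynomial.smul_eq_C_mul]
    have hn : ((n : MvPolynomial (Fin r) ℚ) + 1) = MvPolynomial.C ((n : ℚ) + 1) := by
      rw [map_add, map_natCast, map_one]
    have hfac : ((n : ℚ) + 1) * (((n + 1).factorial : ℚ))⁻¹ = ((n.factorial : ℚ))⁻¹ := by
      have h2 : ((n : ℚ) + 1) ≠ 0 := by positivity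
      have h3 : (n.factorial : ℚ) ≠ 0 := Nat.cast_ne_zero.mpr n.factorial_ne_zero
      rw [Nat.factorial_succ]
      push_cast
      field_simp
    have harg : (((n + 1 : ℕ) : ℤ)) + j = (n : ℤ) + (j + 1) := by push_cast; ring
    rw [hn, ← mul_assoc, ← map_mul, hfac, harg]
  have Diter_u : ∀ (k : ℕ) (j : ℤ), D^[k] (u j) = u (j + k) := by
    intro k
    induction k with
    | zero => intro j; simp
    | succ k IH =>
      intro j
      rw [Function.iterate_succ_apply, Du, IH]
      congr 1; push_cast; ring
  -- D is additive, commutes with C-mul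
  have Dadd : ∀ f g, D (f + g) = D f + D g := by
    intro f g; rw [hD, hD, hD]; ext n; simp [mul_add]
  have DC : ∀ a f, D (PowerSeries.C (R := MvPolynomial (Fin r) ℚ) a * f)
      = PowerSeries.C (R := MvPolynomial (Fin r) ℚ) a * D f := by
    intro a f; rw [hD, hD]; ext n
    simp only [PowerSeries.coeff_mk, PowerSeries.coeff_C_mul]
    ring
  have DiterAdd : ∀ k f g, D^[k] (f + g) = D^[k] f + D^[k] g := by
    intro k
    induction k with
    | zero => intro f g; simp
    | succ k IH => intro f g; rw [Function.iterate_succ_apply, Function.iterate_succ_apply,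
        Function.iterate_succ_apply, Dadd, IH]
  have DiterC : ∀ k a f, D^[k] (PowerSeries.C (R := MvPolynomial (Fin r) ℚ) a * f)
      = PowerSeries.C (R := MvPolynomial (Fin r) ℚ) a * D^[k] f := by
    intro k
    induction k with
    | zero => intro a f; simp
    | succ k IH => intro a f; rw [Function.iterate_succ_apply, Function.iterate_succ_apply, DC, IH]
  have Ladd : ∀ f g, L (f + g) = L f + L g := by
    intro f g
    rw [hL, hL, hL, ← Finset.sum_add_distrib]
    exact Finset.sum_congr rfl fun i _ => by rw [DiterAdd, mul_add]
  have LC : ∀ a f, L (PowerSeries.C (R := MvPolynomial (Fin r) ℚ) a * f)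
      = PowerSeries.C (R := MvPolynomial (Fin r) ℚ) a * L f := by
    intro a f
    rw [hL, hL, Finset.mul_sum]
    exact Finset.sum_congr rfl fun i _ => by rw [DiterC]; ring
  have Lsub : ∀ f g, L (f - g) = L f - L g := by
    intro f g
    have hg : f - g = f + PowerSeries.C (R := MvPolynomial (Fin r) ℚ) (-1) * g := by
      rw [map_neg, map_one, neg_one_mul]; ring
    rw [hg, Ladd, LC, map_neg, map_one, neg_one_mul]; ring
  -- coeff of iterated D
  have coeff_Diter : ∀ (k : ℕ) (n : ℕ) ψ, PowerSeries.coeff (R := MvPolynomial (Fin r) ℚ) n (D^[k] ψ)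
      = ((∏ j ∈ Finset.range k, (n + j + 1) : ℕ) : MvPolynomial (Fin r) ℚ)
        * PowerSeries.coeff (R := MvPolynomial (Fin r) ℚ) (n + k) ψ := by
    intro k
    induction k with
    | zero => intro n ψ; simp
    | succ k IH =>
      intro n ψ
      rw [Function.iterate_succ_apply, IH, hD, PowerSeries.coeff_mk, Finset.prod_range_succ]
      push_cast
      have hidx : n + (k + 1) = n + k + 1 := rfl
      rw [mul_assoc, hidx]
  -- L kills u (-m) for m < r
  have Lu : ∀ m : ℕ, m < r → L (u (-(m : ℤ))) = 0 := by
    intro m hm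
    rw [hL]
    ext n
    rw [map_sum, map_zero]
    have step : ∀ i ∈ Finset.range (r + 1),
        PowerSeries.coeff (R := MvPolynomial (Fin r) ℚ) n
          (PowerSeries.C (R := MvPolynomial (Fin r) ℚ) ((-1) ^ i * e i) * D^[r - i] (u (-(m : ℤ))))
        = (n.factorial : ℚ)⁻¹ • ((-1) ^ i * e i * h (((n : ℤ) + r - m) - i)) := by
      intro i hi
      have hir : i ≤ r := by simp at hi; omega
      have harg : (n : ℤ) + (-(m : ℤ) + ((r - i : ℕ) : ℤ)) = ((n : ℤ) + r - m) - i := by omega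
      rw [Diter_u, PowerSeries.coeff_C_mul, coeff_u, mul_smul_comm, harg]
    rw [Finset.sum_congr rfl step, ← Finset.smul_sum, hconv]
    have : (n : ℤ) + r - m ≠ 0 := by omega
    simp [this]
  -- coefficient of a linear combination
  have coeff_comb : ∀ (c : Fin r → MvPolynomial (Fin r) ℚ) (n : ℕ),
      PowerSeries.coeff (R := MvPolynomial (Fin r) ℚ) n
        (∑ i : Fin r, PowerSeries.C (R := MvPolynomial (Fin r) ℚ) (c i) * u (-((i : ℕ) : ℤ)))
      = (n.factorial : ℚ)⁻¹ • ∑ i : Fin r, c i * h ((n : ℤ) - (i : ℕ)) := by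
    intro c n
    rw [map_sum, Finset.smul_sum]
    exact Finset.sum_congr rfl fun i _ => by
      rw [PowerSeries.coeff_C_mul, coeff_u, mul_smul_comm, ← sub_eq_add_neg]
  -- uniqueness
  have uniq : ∀ χ, L χ = 0 → (∀ n, n < r → PowerSeries.coeff (R := MvPolynomial (Fin r) ℚ) n χ = 0) →
      χ = 0 := by
    intro χ hLχ hlow
    have key : ∀ m, PowerSeries.coeff (R := MvPolynomial (Fin r) ℚ) m χ = 0 := by
      intro m
      induction m using Nat.strong_induction_on with
      | _ m IH =>
        by_cases hm : m < r
        · exact hlow m hm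
        · have hLc : PowerSeries.coeff (R := MvPolynomial (Fin r) ℚ) (m - r) (L χ) = 0 := by
            rw [hLχ]; simp
          rw [hL, map_sum] at hLc
          rw [Finset.sum_eq_single 0 (fun i hi hi0 => by
            rw [PowerSeries.coeff_C_mul, coeff_Diter]
            have : (m - r) + (r - i) < m := by simp at hi; omega
            rw [IH _ this]; ring) (by simp)] at hLc
          rw [PowerSeries.coeff_C_mul, coeff_Diter] at hLc
          have hmr : (m - r) + (r - 0) = m := by omega
          rw [hmr] at hLc
          simp only [he0, pow_zero, one_mul, Nat.sub_zero] at hLc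
          have hprod : ((∏ j ∈ Finset.range r, ((m - r) + j + 1) : ℕ) :
              MvPolynomial (Fin r) ℚ) ≠ 0 := by
            rw [Nat.cast_ne_zero]
            have hpos : 0 < ∏ j ∈ Finset.range r, ((m - r) + j + 1) :=
              Finset.prod_pos fun j _ => by omega
            omega
          rcases mul_eq_zero.mp hLc with hc | hc
          · exact absurd hc hprod
          · exact hc
    exact PowerSeries.ext fun m => by simp [key m]
  refine ⟨fun i => Lu i i.2, ?_, ?_⟩
  · -- independence
    intro c hc i
    have key : ∀ n : ℕ, ∀ hn : n < r, c ⟨n, hn⟩ = 0 := by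
      intro n
      induction n using Nat.strong_induction_on with
      | _ n IH =>
        intro hn
        have hS : (n.factorial : ℚ)⁻¹ • ∑ i : Fin r, c i * h ((n : ℤ) - (i : ℕ)) = 0 := by
          rw [← coeff_comb, hc, map_zero]
        have hfac : (n.factorial : ℚ) ≠ 0 := Nat.cast_ne_zero.mpr n.factorial_ne_zero
        have hsum : ∑ i : Fin r, c i * h ((n : ℤ) - (i : ℕ)) = 0 := by
          have hS2 := congrArg (fun x => (n.factorial : ℚ) • x) hS
          simpa [smul_smul, mul_inv_cancel₀ hfac] using hS2
        rw [Finset.sum_eq_single ⟨n, hn⟩ (fun i _ hne => by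
          rcases lt_or_gt_of_ne (fun hv : (i : ℕ) = n => hne (Fin.ext hv)) with hlt | hgt
          · have hz : c i = 0 := by
              rw [← Fin.eta i i.isLt]; exact IH _ hlt i.isLt
            rw [hz, zero_mul]
          · rw [hhneg _ (by omega), mul_zero]) (by simp)] at hsum
        simpa [h0] using hsum
    have : c ⟨(i : ℕ), i.2⟩ = 0 := key i i.2
    simpa using this
  · -- spanning
    intro ψ hψ
    set φ : ℕ → MvPolynomial (Fin r) ℚ :=
      fun n => (n.factorial : ℚ) • PowerSeries.coeff (R := MvPolynomial (Fin r) ℚ) n ψ with hφ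
    refine ⟨fun i => cseq h φ i, ?_⟩
    set Φ := ∑ i : Fin r, PowerSeries.C (R := MvPolynomial (Fin r) ℚ) (cseq h φ (i : ℕ)) *
      u (-((i : ℕ) : ℤ)) with hΦ
    have LΦ : L Φ = 0 := by
      rw [hΦ]
      have : ∀ s : Finset (Fin r),
          L (∑ i ∈ s, PowerSeries.C (R := MvPolynomial (Fin r) ℚ) (cseq h φ (i : ℕ)) *
            u (-((i : ℕ) : ℤ))) = 0 := by
        intro s
        induction s using Finset.cons_induction with
        | empty =>
          have : L 0 = 0 := by
            have := Lsub 0 0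
            simpa using this
          simpa using this
        | cons a s ha IH =>
          rw [Finset.sum_cons, Ladd, IH, LC, Lu a a.2]
          simp
      exact this Finset.univ
    have hdiff : ψ - Φ = 0 := by
      apply uniq
      · rw [Lsub, hψ, LΦ, sub_zero]
      · intro n hn
        have hcoeffΦ : PowerSeries.coeff (R := MvPolynomial (Fin r) ℚ) n Φ
            = (n.factorial : ℚ)⁻¹ • ∑ i : Fin r, cseq h φ (i : ℕ) * h ((n : ℤ) - (i : ℕ)) := by
          rw [hΦ]; exact coeff_comb _ n
        rw [map_sub, hcoeffΦ]
        have hsum : ∑ i : Fin r, cseq h φ (i : ℕ) * h ((n : ℤ) - (i : ℕ)) = φ n := by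
          rw [← cseq_spec h φ h0 n]
          rw [Fin.sum_univ_eq_sum_range (fun i => cseq h φ i * h ((n : ℤ) - (i : ℕ)))]
          symm
          apply Finset.sum_subset
          · intro x hx
            simp at hx ⊢
            omega
          · intro x hx hnx
            simp at hx hnx
            rw [hhneg _ (by omega), mul_zero]
        rw [hsum, hφ]
        rw [smul_smul]
        have hfac : (n.factorial : ℚ) ≠ 0 := Nat.cast_ne_zero.mpr n.factorial_ne_zero
        rw [inv_mul_cancel₀ hfac, one_smul, sub_self]
    exact sub_eq_zero.mp hdiff
end

section
/- (Universal Cauchy formula) Let A be a commutative B_r-algebra and let φ = Σ_{n≥0} a_n t^n/n! ∈ A[[t]] satisfy (D^r − e_1 D^{r-1} + … + (−1)^r e_r)φ = 0. Then φ = U_0(φ) u_0 + U_1(φ) u_{-1} + … + U_{r-1}(φ) u_{-r+1} in A[[t]]. -/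
theorem stmt_4 (r : ℕ) (hr : 1 ≤ r)
    (e : ℕ → MvPolynomial (Fin r) ℚ)
    (he0 : e 0 = 1)
    (heX : ∀ i : Fin r, e ((i : ℕ) + 1) = MvPolynomial.X i)
    (heTop : ∀ i : ℕ, r < i → e i = 0)
    (h : ℤ → MvPolynomial (Fin r) ℚ)
    (hhneg : ∀ n : ℤ, n < 0 → h n = 0)
    (hconv : ∀ n : ℤ,
      ∑ i ∈ Finset.range (r + 1),
          (-1 : MvPolynomial (Fin r) ℚ) ^ i * e i * h (n - (i : ℤ)) =
        if n = 0 then 1 else 0)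
    (u : ℤ → PowerSeries (MvPolynomial (Fin r) ℚ))
    (hu : ∀ j : ℤ, u j = PowerSeries.mk fun n : ℕ => (n.factorial : ℚ)⁻¹ • h ((n : ℤ) + j))
    (A : Type) [CommRing A] [Algebra (MvPolynomial (Fin r) ℚ) A]
    (a : ℕ → A)
    (φ : PowerSeries A)
    (hφ : φ = PowerSeries.mk fun n : ℕ =>
      algebraMap (MvPolynomial (Fin r) ℚ) A (MvPolynomial.C ((n.factorial : ℚ)⁻¹)) * a n)
    (D : PowerSeries A → PowerSeries A)
    (hD : ∀ ψ : PowerSeries A, D ψ = PowerSeries.mk fun n : ℕ =>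
      ((n : A) + 1) * PowerSeries.coeff (n + 1) ψ)
    (hode : ∑ i ∈ Finset.range (r + 1),
        PowerSeries.C ((-1 : A) ^ i * algebraMap (MvPolynomial (Fin r) ℚ) A (e i)) * D^[r - i] φ = 0) :
    φ = ∑ i ∈ Finset.range r,
      PowerSeries.C (∑ l ∈ Finset.range (i + 1),
          (-1 : A) ^ l * algebraMap (MvPolynomial (Fin r) ℚ) A (e l) * a (i - l)) *
        PowerSeries.map (algebraMap (MvPolynomial (Fin r) ℚ) A) (u (-(i : ℤ))) := by
  set f := algebraMap (MvPolynomial (Fin r) ℚ) A with hf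
  -- factorial inverse identity
  have hfact : ∀ n : ℕ, f (MvPolynomial.C ((n.factorial : ℚ))) *
      f (MvPolynomial.C ((n.factorial : ℚ)⁻¹)) = 1 := by
    intro n
    rw [← map_mul, ← map_mul, mul_inv_cancel₀ (by exact_mod_cast Nat.factorial_ne_zero n),
      map_one, map_one]
  -- L1 : iterates of D on φ
  have L1 : ∀ k : ℕ, D^[k] φ = PowerSeries.mk fun n : ℕ =>
      f (MvPolynomial.C ((n.factorial : ℚ)⁻¹)) * a (n + k) := by
    intro k
    induction k with
    | zero => simpa using hφ
    | succ k ih =>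
      rw [Function.iterate_succ_apply', ih, hD]
      ext n
      simp only [PowerSeries.coeff_mk]
      have key : ((n : A) + 1) * f (MvPolynomial.C (((n + 1).factorial : ℚ)⁻¹)) =
          f (MvPolynomial.C ((n.factorial : ℚ)⁻¹)) := by
        have h1 : ((n : A) + 1) = f (MvPolynomial.C ((n : ℚ) + 1)) := by
          simp
        have hq : ((n : ℚ) + 1) * (((n + 1).factorial : ℚ))⁻¹ = ((n.factorial : ℚ))⁻¹ := by
          have hne : ((n.factorial : ℚ)) ≠ 0 := by exact_mod_cast Nat.factorial_ne_zero n
          have hne2 : ((n : ℚ) + 1) ≠ 0 := by positivity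
          rw [Nat.factorial_succ]
          push_cast
          field_simp
        rw [h1, ← map_mul, ← map_mul, hq]
      rw [← mul_assoc, key]
      congr 2
      omega
  -- S : the recurrence on a
  have S : ∀ n : ℕ, ∑ i ∈ Finset.range (r + 1),
      (-1 : A) ^ i * f (e i) * a (n + r - i) = 0 := by
    intro n
    have h0 := congrArg (PowerSeries.coeff n) hode
    rw [map_sum, map_zero] at h0
    have h1 : ∀ i ∈ Finset.range (r + 1),
        PowerSeries.coeff n (PowerSeries.C ((-1 : A) ^ i * f (e i)) * D^[r - i] φ) =
          (-1 : A) ^ i * f (e i) * (f (MvPolynomial.C ((n.factorial : ℚ)⁻¹)) * a (n + r - i)) := by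
      intro i hi
      rw [PowerSeries.coeff_C_mul, L1 (r - i), PowerSeries.coeff_mk]
      have : n + (r - i) = n + r - i := by
        simp only [Finset.mem_range] at hi; omega
      rw [this]
    rw [Finset.sum_congr rfl h1] at h0
    have h2 := congrArg (fun x => f (MvPolynomial.C ((n.factorial : ℚ))) * x) h0
    simp only [Finset.mul_sum, mul_zero] at h2
    rw [← h2]
    apply Finset.sum_congr rfl
    intro i _
    have hfa := hfact n
    calc (-1 : A) ^ i * f (e i) * a (n + r - i)
        = ((f (MvPolynomial.C ((n.factorial : ℚ))) * f (MvPolynomial.C ((n.factorial : ℚ)⁻¹))) *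
          ((-1 : A) ^ i * f (e i) * a (n + r - i))) := by rw [hfa, one_mul]
      _ = f (MvPolynomial.C ((n.factorial : ℚ))) *
          ((-1 : A) ^ i * f (e i) * (f (MvPolynomial.C ((n.factorial : ℚ)⁻¹)) * a (n + r - i))) := by
          ring
  -- generic coefficient helper
  have coeff_term : ∀ (c : A) (i n : ℕ) (ψ : PowerSeries A),
      PowerSeries.coeff n (PowerSeries.C c * PowerSeries.X ^ i * ψ) =
        if i ≤ n then c * PowerSeries.coeff (n - i) ψ else 0 := by
    intro c i n ψ
    rw [mul_assoc, PowerSeries.coeff_C_mul, PowerSeries.coeff_X_pow_mul']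
    split_ifs <;> simp
  -- the series
  set ψ : PowerSeries A := PowerSeries.mk fun n => a n with hψdef
  set Hh : PowerSeries A := PowerSeries.mk fun n : ℕ => f (h (n : ℤ)) with hHdef
  set E' : PowerSeries A := ∑ i ∈ Finset.range (r + 1),
      PowerSeries.C ((-1 : A) ^ i * f (e i)) * PowerSeries.X ^ i with hEdef
  set P : PowerSeries A := ∑ i ∈ Finset.range r,
      PowerSeries.C (∑ l ∈ Finset.range (i + 1),
        (-1 : A) ^ l * f (e l) * a (i - l)) * PowerSeries.X ^ i with hPdef
  -- H at (n : ℤ) - i equals the if-expression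
  have hH : ∀ (n i : ℕ), (if i ≤ n then f (h ((n - i : ℕ) : ℤ)) else 0) =
      f (h ((n : ℤ) - (i : ℤ))) := by
    intro n i
    split_ifs with hle
    · congr 2; omega
    · rw [hhneg _ (by omega), map_zero]
  -- (1) E' * Hh = 1
  have hEH : E' * Hh = 1 := by
    ext n
    rw [hEdef, Finset.sum_mul, map_sum]
    have : ∀ i ∈ Finset.range (r + 1),
        PowerSeries.coeff n (PowerSeries.C ((-1 : A) ^ i * f (e i)) * PowerSeries.X ^ i * Hh) =
          (-1 : A) ^ i * f (e i) * f (h ((n : ℤ) - (i : ℤ))) := by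
      intro i _
      rw [coeff_term]
      rw [← hH n i]
      split_ifs with hle
      · rw [hHdef, PowerSeries.coeff_mk]
      · rw [mul_zero]
    rw [Finset.sum_congr rfl this]
    have hc := congrArg f (hconv (n : ℤ))
    rw [map_sum] at hc
    simp only [map_mul, map_pow, map_neg, map_one] at hc
    rw [hc]
    rcases eq_or_ne n 0 with rfl | hn
    · simp
    · rw [if_neg (by exact_mod_cast hn : ¬((n : ℤ) = 0)), map_zero,
        PowerSeries.coeff_one, if_neg hn]
  -- (2) E' * ψ = P
  have hEψ : E' * ψ = P := by
    ext k
    rw [hEdef, hPdef, Finset.sum_mul, map_sum, map_sum]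
    have lhs : ∀ i ∈ Finset.range (r + 1),
        PowerSeries.coeff k (PowerSeries.C ((-1 : A) ^ i * f (e i)) * PowerSeries.X ^ i * ψ) =
          if i ≤ k then (-1 : A) ^ i * f (e i) * a (k - i) else 0 := by
      intro i _
      rw [coeff_term]
      split_ifs with hle
      · rw [hψdef, PowerSeries.coeff_mk, mul_assoc]
      · rfl
    have rhs : ∀ i ∈ Finset.range r,
        PowerSeries.coeff k (PowerSeries.C (∑ l ∈ Finset.range (i + 1),
            (-1 : A) ^ l * f (e l) * a (i - l)) * PowerSeries.X ^ i) =
          if k = i then (∑ l ∈ Finset.range (i + 1), (-1 : A) ^ l * f (e l) * a (i - l)) else 0 := by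
      intro i _
      rw [PowerSeries.coeff_C_mul, PowerSeries.coeff_X_pow]
      split_ifs <;> simp
    rw [Finset.sum_congr rfl lhs, Finset.sum_congr rfl rhs]
    rcases lt_or_ge k r with hk | hk
    · -- k < r
      have hrhs : (∑ i ∈ Finset.range r, if k = i then
            (∑ l ∈ Finset.range (i + 1), (-1 : A) ^ l * f (e l) * a (i - l)) else 0) =
          ∑ l ∈ Finset.range (k + 1), (-1 : A) ^ l * f (e l) * a (k - l) := by
        rw [Finset.sum_eq_single k (fun i _ hik => if_neg (fun hh => hik hh.symm))
          (fun habs => absurd (Finset.mem_range.2 hk) habs), if_pos rfl]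
      have hlhs : (∑ i ∈ Finset.range (r + 1), if i ≤ k then
            (-1 : A) ^ i * f (e i) * a (k - i) else 0) =
          ∑ i ∈ Finset.range (k + 1), (-1 : A) ^ i * f (e i) * a (k - i) := by
        rw [← Finset.sum_subset (Finset.range_subset_range.2 (by omega : k + 1 ≤ r + 1))
          (fun i hi hni => if_neg (by
            simp only [Finset.mem_range, not_lt] at hni
            omega))]
        apply Finset.sum_congr rfl
        intro i hi
        rw [if_pos (by simp only [Finset.mem_range] at hi; omega)]
      rw [hrhs, hlhs]
    · -- k ≥ r
      have hrhs : (∑ i ∈ Finset.range r, if k = i then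
            (∑ l ∈ Finset.range (i + 1), (-1 : A) ^ l * f (e l) * a (i - l)) else 0) = 0 :=
        Finset.sum_eq_zero (fun i hi => if_neg (by
          simp only [Finset.mem_range] at hi
          omega))
      have hlhs : (∑ i ∈ Finset.range (r + 1), if i ≤ k then
            (-1 : A) ^ i * f (e i) * a (k - i) else 0) = 0 := by
        have hcong : ∀ i ∈ Finset.range (r + 1),
            (if i ≤ k then (-1 : A) ^ i * f (e i) * a (k - i) else 0) =
              (-1 : A) ^ i * f (e i) * a ((k - r) + r - i) := by
          intro i hi
          simp only [Finset.mem_range] at hi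
          rw [if_pos (by omega)]
          congr 2
          omega
        rw [Finset.sum_congr rfl hcong]
        exact S (k - r)
      rw [hrhs, hlhs]
  -- (3) ψ = P * Hh
  have hψPH : ψ = P * Hh := by
    calc ψ = ψ * (E' * Hh) := by rw [hEH, mul_one]
      _ = (E' * ψ) * Hh := by ring
      _ = P * Hh := by rw [hEψ]
  -- conclusion
  ext n
  have hl : PowerSeries.coeff n φ = f (MvPolynomial.C ((n.factorial : ℚ)⁻¹)) * a n := by
    rw [hφ, PowerSeries.coeff_mk]
  have ha : a n = ∑ i ∈ Finset.range r,
      (∑ l ∈ Finset.range (i + 1), (-1 : A) ^ l * f (e l) * a (i - l)) *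
        f (h ((n : ℤ) - (i : ℤ))) := by
    have := congrArg (PowerSeries.coeff n) hψPH
    rw [hψdef, PowerSeries.coeff_mk, hPdef, Finset.sum_mul, map_sum] at this
    rw [this]
    apply Finset.sum_congr rfl
    intro i _
    rw [coeff_term, ← hH n i]
    split_ifs with hle
    · rw [hHdef, PowerSeries.coeff_mk]
    · rw [mul_zero]
  rw [hl, ha, Finset.mul_sum, map_sum]
  apply Finset.sum_congr rfl
  intro i _
  rw [PowerSeries.coeff_C_mul, PowerSeries.coeff_map, hu, PowerSeries.coeff_mk,
    MvPolynomial.smul_eq_C_mul, map_mul]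
  have : (n : ℤ) + -(i : ℤ) = (n : ℤ) - (i : ℤ) := by ring
  rw [this]
  ring
end

section
/- In the ring of formal power series in z with coefficients in B_r[[t]], the following identity holds: (Σ_{i≥0} u_{i-r} z^{i}) · E_r(z) = Σ_{i=0}^{r} E_i(z) z^{r-i} u_{-i}, where E_i(z) := Σ_{k=0}^{i} (−1)^k e_k z^k. (Equivalently, Σ_{i ≥ -r} u_i z^i = (1/E_r(z)) Σ_{i=0}^{r} (E_i(z)/z^i) u_{-i} as a Laurent series in z.) -/
theorem stmt_6 (r : ℕ) (hr : 1 ≤ r)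
    (e : ℕ → MvPolynomial (Fin r) ℚ)
    (he0 : e 0 = 1)
    (heX : ∀ i : Fin r, e ((i : ℕ) + 1) = MvPolynomial.X i)
    (heTop : ∀ i : ℕ, r < i → e i = 0)
    (h : ℤ → MvPolynomial (Fin r) ℚ)
    (hhneg : ∀ n : ℤ, n < 0 → h n = 0)
    (hconv : ∀ n : ℤ,
      ∑ i ∈ Finset.range (r + 1),
          (-1 : MvPolynomial (Fin r) ℚ) ^ i * e i * h (n - (i : ℤ)) =
        if n = 0 then 1 else 0)
    (u : ℤ → PowerSeries (MvPolynomial (Fin r) ℚ))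
    (hu : ∀ j : ℤ, u j = PowerSeries.mk fun n : ℕ => (n.factorial : ℚ)⁻¹ • h ((n : ℤ) + j))
    (E : ℕ → PowerSeries (PowerSeries (MvPolynomial (Fin r) ℚ)))
    (hE : ∀ m : ℕ, E m = ∑ k ∈ Finset.range (m + 1),
      PowerSeries.C (R := PowerSeries (MvPolynomial (Fin r) ℚ)) (PowerSeries.C (R := MvPolynomial (Fin r) ℚ) ((-1 : MvPolynomial (Fin r) ℚ) ^ k * e k)) * PowerSeries.X ^ k) :
    (PowerSeries.mk fun i : ℕ => u ((i : ℤ) - (r : ℤ))) * E r =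
      ∑ i ∈ Finset.range (r + 1),
        E i * PowerSeries.X ^ (r - i) * PowerSeries.C (R := PowerSeries (MvPolynomial (Fin r) ℚ)) (u (-(i : ℤ))) := by
  classical
  -- key : for positive shifts the convolution with u vanishes
  have key : ∀ j : ℤ, 0 < j →
      ∑ k ∈ Finset.range (r + 1),
        PowerSeries.C (R := MvPolynomial (Fin r) ℚ) ((-1 : MvPolynomial (Fin r) ℚ) ^ k * e k) * u (j - (k : ℤ)) = 0 := by
    intro j hj
    apply PowerSeries.ext
    intro m
    simp only [map_sum, PowerSeries.coeff_C_mul, hu, PowerSeries.coeff_mk,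
      mul_smul_comm, map_zero]
    rw [← Finset.smul_sum]
    have harg : ∀ k ∈ Finset.range (r + 1),
        (-1 : MvPolynomial (Fin r) ℚ) ^ k * e k * h ((m : ℤ) + (j - (k : ℤ))) =
        (-1 : MvPolynomial (Fin r) ℚ) ^ k * e k * h (((m : ℤ) + j) - (k : ℤ)) := by
      intro k _
      congr 1
      ring_nf
    rw [Finset.sum_congr rfl harg, hconv, if_neg (by omega), smul_zero]
  apply PowerSeries.ext
  intro n
  have hLHS : (PowerSeries.coeff (R := PowerSeries (MvPolynomial (Fin r) ℚ)) n)
      ((PowerSeries.mk fun i : ℕ => u ((i : ℤ) - (r : ℤ))) * E r) =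
      ∑ k ∈ Finset.range (r + 1),
        PowerSeries.C (R := MvPolynomial (Fin r) ℚ) ((-1 : MvPolynomial (Fin r) ℚ) ^ k * e k) *
          (if k ≤ n then u (((n - k : ℕ) : ℤ) - (r : ℤ)) else 0) := by
    rw [hE, Finset.mul_sum, map_sum]
    refine Finset.sum_congr rfl fun k _ => ?_
    rw [mul_left_comm, PowerSeries.coeff_C_mul, PowerSeries.coeff_mul_X_pow']
    split_ifs with hk
    · rw [PowerSeries.coeff_mk]
    · rfl
  have hRHS : (PowerSeries.coeff (R := PowerSeries (MvPolynomial (Fin r) ℚ)) n)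
      (∑ i ∈ Finset.range (r + 1),
        E i * PowerSeries.X ^ (r - i) * PowerSeries.C (R := PowerSeries (MvPolynomial (Fin r) ℚ)) (u (-(i : ℤ)))) =
      ∑ i ∈ Finset.range (r + 1),
        (if r - i ≤ n ∧ n - (r - i) ≤ i then
            PowerSeries.C (R := MvPolynomial (Fin r) ℚ) ((-1 : MvPolynomial (Fin r) ℚ) ^ (n - (r - i)) * e (n - (r - i))) else 0) *
          u (-(i : ℤ)) := by
    rw [map_sum]
    refine Finset.sum_congr rfl fun i hi => ?_
    rw [PowerSeries.coeff_mul_C, PowerSeries.coeff_mul_X_pow']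
    by_cases h1 : r - i ≤ n
    · rw [if_pos h1, hE, map_sum]
      simp_rw [PowerSeries.coeff_C_mul, PowerSeries.coeff_X_pow, mul_ite, mul_one, mul_zero]
      rw [Finset.sum_ite_eq (Finset.range (i + 1)) (n - (r - i))]
      simp only [Finset.mem_range, Nat.lt_succ_iff]
      split_ifs with h2 h3 h3
      · rfl
      · exact absurd ⟨h1, h2⟩ h3
      · exact absurd h3.2 h2
      · rfl
    · rw [if_neg h1, if_neg (fun hc => h1 hc.1), zero_mul]
  rw [hLHS, hRHS]
  by_cases hn : n ≤ r
  · -- reindex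
    have hsub1 : Finset.range (n + 1) ⊆ Finset.range (r + 1) :=
      Finset.range_subset_range.2 (by omega)
    rw [← Finset.sum_subset hsub1 (by
      intro k hk hk'
      simp only [Finset.mem_range, Nat.lt_succ_iff] at hk hk'
      rw [if_neg (by omega), mul_zero])]
    have hsub2 : Finset.Ico (r - n) (r + 1) ⊆ Finset.range (r + 1) := by
      intro x hx
      simp only [Finset.mem_Ico] at hx
      exact Finset.mem_range.2 hx.2
    rw [← Finset.sum_subset hsub2 (by
      intro i hi hi'
      simp only [Finset.mem_range, Finset.mem_Ico, not_and, not_le] at hi hi'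
      rw [if_neg (by omega), zero_mul])]
    rw [Finset.sum_Ico_eq_sum_range]
    have hlen : r + 1 - (r - n) = n + 1 := by omega
    rw [hlen]
    refine Finset.sum_congr rfl fun k hk => ?_
    simp only [Finset.mem_range, Nat.lt_succ_iff] at hk
    rw [if_pos (by omega)]
    have hi1 : n - (r - (r - n + k)) = k := by omega
    have hi2 : (((n - k : ℕ) : ℤ) - (r : ℤ)) = -((r - n + k : ℕ) : ℤ) := by omega
    rw [hi1, hi2]
    rw [if_pos (show r - (r - n + k) ≤ n ∧ k ≤ r - n + k by omega)]
  · -- n > r : both sides vanish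
    push_neg at hn
    have hL : ∀ k ∈ Finset.range (r + 1),
        PowerSeries.C (R := MvPolynomial (Fin r) ℚ) ((-1 : MvPolynomial (Fin r) ℚ) ^ k * e k) *
          (if k ≤ n then u (((n - k : ℕ) : ℤ) - (r : ℤ)) else 0) =
        PowerSeries.C (R := MvPolynomial (Fin r) ℚ) ((-1 : MvPolynomial (Fin r) ℚ) ^ k * e k) * u (((n : ℤ) - (r : ℤ)) - (k : ℤ)) := by
      intro k hk
      simp only [Finset.mem_range, Nat.lt_succ_iff] at hk
      rw [if_pos (by omega : k ≤ n),
        show (((n - k : ℕ) : ℤ) - (r : ℤ)) = ((n : ℤ) - (r : ℤ)) - (k : ℤ) by omega]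
    rw [Finset.sum_congr rfl hL, key ((n : ℤ) - (r : ℤ)) (by omega)]
    refine (Finset.sum_eq_zero fun i hi => ?_).symm
    simp only [Finset.mem_range, Nat.lt_succ_iff] at hi
    rw [if_neg (by omega), zero_mul]
end

section
/- Let λ = (λ_1 ≥ … ≥ λ_r ≥ 0) be a partition with at most r parts and let v be an indeterminate. Define the sequence H' = (h'_n)_{n∈ℤ} in B_r[v] by h'_n := h_n − v·h_{n−1}. Then Δ_λ(H') = Σ_{j=0}^{r} (−1)^j v^j Δ_{λ−j}(H_r) in B_r[v]; that is, the Schur determinant of the transformed sequence equals the signed sum over all ways of subtracting a vertical strip of size j from λ. -/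
noncomputable def schurDet {R : Type*} [CommRing R] {r : ℕ} (a : ℤ → R) (lam : Fin r → ℤ) : R :=
  Matrix.det (Matrix.of fun i j : Fin r => a (lam j - ((j : ℕ) : ℤ) + ((i : ℕ) : ℤ)))

open Classical in
/-- `Δ_{λ−j}(a)`: sum of `Δ_μ(a)` over all partitions obtained from `λ` by
subtracting a vertical strip of size `j` (i.e. subtracting `0/1` from each part). -/
noncomputable def stripSumSub {R : Type*} [CommRing R] {r : ℕ} (a : ℤ → R) (lam : Fin r → ℕ)
    (j : ℕ) : R :=
  ∑ S ∈ Finset.powersetCard j (Finset.univ : Finset (Fin r)),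
    if (∀ k l : Fin r, k ≤ l →
          ((lam l : ℤ) - (if l ∈ S then 1 else 0)) ≤ ((lam k : ℤ) - (if k ∈ S then 1 else 0))) ∧
        (∀ k : Fin r, (0 : ℤ) ≤ (lam k : ℤ) - (if k ∈ S then 1 else 0))
    then schurDet a (fun k => (lam k : ℤ) - (if k ∈ S then 1 else 0))
    else 0

-- vanishing lemma
lemma vanish {R : Type*} [CommRing R] {r : ℕ} (hr : 1 ≤ r) (h : ℤ → R)
    (hhneg : ∀ n : ℤ, n < 0 → h n = 0) (lam : Fin r → ℕ) (hlam : Antitone lam)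
    (S : Finset (Fin r))
    (hbad : ¬ ((∀ k l : Fin r, k ≤ l →
          ((lam l : ℤ) - (if l ∈ S then 1 else 0)) ≤ ((lam k : ℤ) - (if k ∈ S then 1 else 0))) ∧
        (∀ k : Fin r, (0 : ℤ) ≤ (lam k : ℤ) - (if k ∈ S then 1 else 0)))) :
    schurDet h (fun k => (lam k : ℤ) - (if k ∈ S then 1 else 0)) = 0 := by
  classical
  unfold schurDet
  by_cases hA : ∀ k l : Fin r, k ≤ l →
      ((lam l : ℤ) - (if l ∈ S then 1 else 0)) ≤ ((lam k : ℤ) - (if k ∈ S then 1 else 0))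
  · -- monotone holds, some part negative
    rw [not_and] at hbad
    have hB := hbad hA
    push_neg at hB
    obtain ⟨k, hk⟩ := hB
    have hrpos : r - 1 < r := by omega
    set last : Fin r := ⟨r - 1, hrpos⟩ with hlastdef
    have hkl : k ≤ last := by
      rw [Fin.le_def]
      have := k.isLt
      simp only [hlastdef]
      omega
    have hlast : (lam last : ℤ) - (if last ∈ S then 1 else 0) < 0 :=
      lt_of_le_of_lt (hA k last hkl) hk
    apply Matrix.det_eq_zero_of_column_eq_zero last
    intro i
    simp only [Matrix.of_apply]
    apply hhneg
    have hi : (i : ℕ) < r := i.isLt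
    have hlv : ((last : Fin r) : ℕ) = r - 1 := rfl
    set c := (if last ∈ S then (1:ℤ) else 0) with hc
    omega
  · push_neg at hA
    obtain ⟨k, l, hkl, hv⟩ := hA
    have hkln : (k : ℕ) ≤ (l : ℕ) := hkl
    have hne : (k : ℕ) ≠ (l : ℕ) := by
      intro hh
      have : k = l := Fin.ext hh
      subst this
      exact lt_irrefl _ hv
    have hkl' : (k : ℕ) < (l : ℕ) := lt_of_le_of_ne hkln hne
    have hll : lam l ≤ lam k := hlam hkl
    have hkey : k ∈ S ∧ l ∉ S ∧ lam k = lam l := by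
      by_cases h1 : k ∈ S <;> by_cases h2 : l ∈ S <;>
        simp only [h1, h2, if_true, if_false] at hv <;>
        first
          | (exact ⟨h1, fun hh => h2 hh, by omega⟩)
          | (exfalso; omega)
    obtain ⟨hkS, hlS, hlamkl⟩ := hkey
    have hklF : k < l := Fin.lt_def.mpr hkl'
    let T : Finset (Fin r) := Finset.univ.filter (fun q => k ≤ q ∧ q < l ∧ q ∈ S)
    have hkT : k ∈ T := by
      simp only [T, Finset.mem_filter, Finset.mem_univ, true_and]
      exact ⟨le_refl k, hklF, hkS⟩
    set p := T.max' ⟨k, hkT⟩ with hpdef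
    have hpT : p ∈ T := T.max'_mem _
    simp only [T, Finset.mem_filter, Finset.mem_univ, true_and] at hpT
    obtain ⟨hp1, hp2, hp3⟩ := hpT
    have hpl : (p : ℕ) + 1 ≤ (l : ℕ) := Fin.lt_def.mp hp2
    have hp1r : (p : ℕ) + 1 < r := lt_of_le_of_lt hpl l.isLt
    set p' : Fin r := ⟨(p : ℕ) + 1, hp1r⟩ with hp'def
    have hp'v : (p' : ℕ) = (p : ℕ) + 1 := rfl
    have hp'S : p' ∉ S := by
      intro hmem
      by_cases hpl' : p' = l
      · exact hlS (hpl' ▸ hmem)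
      · have hp'T : p' ∈ T := by
          simp only [T, Finset.mem_filter, Finset.mem_univ, true_and]
          refine ⟨?_, ?_, hmem⟩
          · rw [Fin.le_def]; have := Fin.le_def.mp hp1; omega
          · rw [Fin.lt_def]
            have : (p' : ℕ) ≠ (l : ℕ) := fun hh => hpl' (Fin.ext hh)
            omega
        have := T.le_max' p' hp'T
        rw [← hpdef] at this
        have := Fin.le_def.mp this
        omega
    have hkp : k ≤ p := hp1
    have hkp' : k ≤ p' := by rw [Fin.le_def]; have := Fin.le_def.mp hp1; omega
    have hp'l : p' ≤ l := by rw [Fin.le_def]; omega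
    have h1 : lam p = lam k :=
      le_antisymm (hlam hkp) (hlamkl ▸ hlam hp2.le)
    have h2 : lam p' = lam k :=
      le_antisymm (hlam hkp') (hlamkl ▸ hlam hp'l)
    apply Matrix.det_zero_of_column_eq (i := p) (j := p')
    · intro hh
      have := Fin.val_eq_of_eq hh
      omega
    · intro i
      simp only [Matrix.of_apply, hp3, hp'S, if_true, if_false]
      congr 1
      rw [h1, h2]
      push_cast [hp'v]
      ring

lemma expand {S : Type*} [CommRing S] {r : ℕ} (H : ℤ → S) (v : S) (lam : Fin r → ℕ) :
    schurDet (fun n => H n - v * H (n - 1)) (fun k => (lam k : ℤ)) =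
      ∑ s : Finset (Fin r), (-1 : S) ^ s.card * v ^ s.card *
        schurDet H (fun k => (lam k : ℤ) - (if k ∈ s then 1 else 0)) := by
  classical
  unfold schurDet
  set Bf : Fin r → Fin r → S := fun j i => H ((lam j : ℤ) - j + i) with hBf
  set Af : Fin r → Fin r → S := fun j i => H ((lam j : ℤ) - j + i - 1) with hAf
  have step1 : (Matrix.of fun i j : Fin r =>
        H ((lam j : ℤ) - j + i) - v * H ((lam j : ℤ) - j + i - 1)).det
      = Matrix.detRowAlternating ((fun j => (-v) • Af j) + Bf) := by
    rw [← Matrix.det_transpose]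
    congr 1
    ext j i
    simp only [Matrix.transpose_apply, Matrix.of_apply, Pi.add_apply, Pi.smul_apply,
      smul_eq_mul, hAf, hBf]
    ring
  rw [step1]
  have e := MultilinearMap.map_add_univ
    (Matrix.detRowAlternating (R := S) (n := Fin r)).toMultilinearMap
    (fun j => (-v) • Af j) Bf
  rw [show (Matrix.detRowAlternating ((fun j => (-v) • Af j) + Bf) : S) =
      (Matrix.detRowAlternating (R := S) (n := Fin r)).toMultilinearMap
        ((fun j => (-v) • Af j) + Bf) from rfl, e]
  refine Finset.sum_congr rfl fun s _ => ?_
  have hpw : s.piecewise (fun j => (-v) • Af j) Bf =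
      s.piecewise (fun j => (fun _ : Fin r => -v) j • (s.piecewise Af Bf) j)
        (s.piecewise Af Bf) := by
    funext j
    by_cases hj : j ∈ s <;> simp [Finset.piecewise, hj]
  rw [hpw, MultilinearMap.map_piecewise_smul, Finset.prod_const, smul_eq_mul, neg_pow]
  congr 1
  have : (Matrix.detRowAlternating (R := S) (n := Fin r)).toMultilinearMap
      (s.piecewise Af Bf) = Matrix.det (Matrix.of fun j i : Fin r => s.piecewise Af Bf j i) :=
    rfl
  rw [this, ← Matrix.det_transpose]
  congr 1
  ext i j
  simp only [Matrix.transpose_apply, Matrix.of_apply]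
  by_cases hj : j ∈ s <;> simp only [Finset.piecewise, hj, if_true, if_false, hAf, hBf] <;>
    congr 1 <;> push_cast <;> ring

theorem stmt_9 (r : ℕ) (hr : 1 ≤ r)
    (e : ℕ → MvPolynomial (Fin r) ℚ)
    (he0 : e 0 = 1)
    (heX : ∀ i : Fin r, e ((i : ℕ) + 1) = MvPolynomial.X i)
    (heTop : ∀ i : ℕ, r < i → e i = 0)
    (h : ℤ → MvPolynomial (Fin r) ℚ)
    (hhneg : ∀ n : ℤ, n < 0 → h n = 0)
    (hconv : ∀ n : ℤ,
      ∑ i ∈ Finset.range (r + 1),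
          (-1 : MvPolynomial (Fin r) ℚ) ^ i * e i * h (n - (i : ℤ)) =
        if n = 0 then 1 else 0)
    (lam : Fin r → ℕ) (hlam : Antitone lam) :
    schurDet (fun n : ℤ => Polynomial.C (h n) - Polynomial.X * Polynomial.C (h (n - 1)))
        (fun k => (lam k : ℤ)) =
      ∑ j ∈ Finset.range (r + 1),
        (-1 : Polynomial (MvPolynomial (Fin r) ℚ)) ^ j * Polynomial.X ^ j * Polynomial.C (stripSumSub h lam j) := by
  classical
  have hmap : ∀ μ : Fin r → ℤ,
      schurDet (fun n => (Polynomial.C (h n) : Polynomial (MvPolynomial (Fin r) ℚ))) μ =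
        Polynomial.C (schurDet h μ) := by
    intro μ
    unfold schurDet
    rw [RingHom.map_det]
    rfl
  calc schurDet (fun n : ℤ => Polynomial.C (h n) - Polynomial.X * Polynomial.C (h (n - 1)))
        (fun k => (lam k : ℤ))
      = ∑ s : Finset (Fin r), (-1 : Polynomial (MvPolynomial (Fin r) ℚ)) ^ s.card * Polynomial.X ^ s.card *
          schurDet (fun n => (Polynomial.C (h n) : Polynomial (MvPolynomial (Fin r) ℚ)))
            (fun k => (lam k : ℤ) - (if k ∈ s then 1 else 0)) :=
        expand (fun n => Polynomial.C (h n)) Polynomial.X lam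
    _ = ∑ j ∈ Finset.range (r + 1),
        (-1 : Polynomial (MvPolynomial (Fin r) ℚ)) ^ j * Polynomial.X ^ j *
          Polynomial.C (stripSumSub h lam j) := by
        simp only [hmap]
        rw [← Finset.powerset_univ, Finset.powerset_card_biUnion,
          Finset.sum_biUnion (fun i _ j _ hij => Finset.pairwise_disjoint_powersetCard _ hij)]
        simp only [Finset.card_univ, Fintype.card_fin]
        refine Finset.sum_congr rfl fun j hj => ?_
        unfold stripSumSub
        rw [map_sum, Finset.mul_sum]
        refine Finset.sum_congr rfl fun s hs => ?_
        obtain ⟨-, hcard⟩ := Finset.mem_powersetCard.mp hs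
        rw [hcard]
        by_cases hc : (∀ k l : Fin r, k ≤ l →
              ((lam l : ℤ) - (if l ∈ s then 1 else 0)) ≤ ((lam k : ℤ) - (if k ∈ s then 1 else 0))) ∧
            (∀ k : Fin r, (0 : ℤ) ≤ (lam k : ℤ) - (if k ∈ s then 1 else 0))
        · rw [if_pos hc]
        · rw [if_neg hc, vanish hr h hhneg lam hlam s hc]
end

section
/- Let λ = (λ_1 ≥ … ≥ λ_r ≥ 0) be a partition with at most r parts and let v be an indeterminate. Define the sequence H∨ = (h∨_n)_{n∈ℤ} in B_r[v] by h∨_n := Σ_{i=0}^{n} h_{n−i} v^i for n ≥ 0 and h∨_n := 0 for n < 0. Then Δ_λ(H_r) = Σ_{j=0}^{r} (−1)^j v^j Δ_{λ−j}(H∨) in B_r[v]; that is, the transformations h_n ↦ h_n − v h_{n−1} and h_n ↦ Σ_{i=0}^{n} h_{n−i} v^i of sequences are mutually inverse at the level of Schur determinants. -/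
open Finset in
lemma my_piecewise_smul {R M N ι : Type*} [CommSemiring R] [AddCommMonoid M] [Module R M]
    [AddCommMonoid N] [Module R N] [DecidableEq ι]
    (f : MultilinearMap R (fun _ : ι => M) N) (c : R) (m : ι → M) (s : Finset ι) :
    ∀ m' : ι → M,
      f (s.piecewise (fun i => c • m i) m') = c ^ s.card • f (s.piecewise m m') := by
  induction s using Finset.induction_on with
  | empty => intro m'; simp
  | insert a s ha ih =>
    intro m'
    rw [Finset.piecewise_insert, Finset.piecewise_insert, f.map_update_smul,
      Finset.update_piecewise_of_notMem _ _ _ ha, Finset.update_piecewise_of_notMem _ _ _ ha,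
      ih, Finset.card_insert_of_notMem ha, pow_succ, smul_smul, mul_comm]

/-- If the shifted sequence fails to be a partition, the Schur determinant vanishes
when the underlying sequence vanishes in negative degrees. -/
lemma my_vanish {R : Type*} [CommRing R] {r : ℕ} (hr : 1 ≤ r)
    (a : ℤ → R) (ha : ∀ n : ℤ, n < 0 → a n = 0)
    (lam : Fin r → ℕ) (hlam : Antitone lam) (s : Finset (Fin r))
    (hcond : ¬ ((∀ k l : Fin r, k ≤ l →
          ((lam l : ℤ) - (if l ∈ s then 1 else 0)) ≤ ((lam k : ℤ) - (if k ∈ s then 1 else 0))) ∧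
        (∀ k : Fin r, (0 : ℤ) ≤ (lam k : ℤ) - (if k ∈ s then 1 else 0)))) :
    schurDet a (fun k => (lam k : ℤ) - (if k ∈ s then 1 else 0)) = 0 := by
  classical
  set μ : Fin r → ℤ := fun k => (lam k : ℤ) - (if k ∈ s then 1 else 0) with hμ
  by_cases hP : ∀ k l : Fin r, k ≤ l → μ l ≤ μ k
  · -- then some part is negative
    have hQ : ∃ k : Fin r, μ k < 0 := by
      by_contra hq
      push_neg at hq
      exact hcond ⟨hP, fun k => not_lt.mp fun hk => absurd (hq k) (not_le.mpr hk)⟩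
    obtain ⟨k, hk⟩ := hQ
    have hr1 : r - 1 < r := by omega
    set j0 : Fin r := ⟨r - 1, hr1⟩
    have hkj0 : k ≤ j0 := by
      rw [Fin.le_def]
      have := k.isLt
      simp only [j0]
      omega
    have hj0 : μ j0 < 0 := lt_of_le_of_lt (hP k j0 hkj0) hk
    apply Matrix.det_eq_zero_of_column_eq_zero j0
    intro i
    simp only [Matrix.of_apply]
    apply ha
    have := i.isLt
    simp only [j0] at hj0 ⊢
    omega
  · -- adjacent violation gives two equal columns
    push_neg at hP
    obtain ⟨k, l, hkl, hviol⟩ := hP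
    -- find an adjacent violation
    have hadj : ∃ k : Fin r, ∃ hk : (k : ℕ) + 1 < r, μ k < μ ⟨(k : ℕ) + 1, hk⟩ := by
      by_contra hc
      push_neg at hc
      -- then μ is antitone, contradiction
      have mono : ∀ d : ℕ, ∀ k l : Fin r, (l : ℕ) = (k : ℕ) + d → μ l ≤ μ k := by
        intro d
        induction d with
        | zero =>
          intro k l hd
          have : l = k := Fin.ext (by omega)
          subst this; exact le_rfl
        | succ d ih =>
          intro k l hd
          have hk1 : (k : ℕ) + d < r := by have := l.isLt; omega
          have h1 : μ l ≤ μ ⟨(k : ℕ) + d, hk1⟩ := by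
            have hl : l = ⟨((⟨(k : ℕ) + d, hk1⟩ : Fin r) : ℕ) + 1, by simpa using (by have := l.isLt; omega : (k : ℕ) + d + 1 < r)⟩ := Fin.ext (by simp; omega)
            rw [hl]
            exact le_of_not_gt (by
              intro hlt
              exact absurd hlt (by simpa using hc ⟨(k : ℕ) + d, hk1⟩ (by simp; omega)))
          exact h1.trans (ih k ⟨(k : ℕ) + d, hk1⟩ (by simp))
      exact absurd (mono ((l : ℕ) - (k : ℕ)) k l (by rw [Fin.le_def] at hkl; omega)) (not_le.mpr hviol)
    obtain ⟨k, hk1, hkv⟩ := hadj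
    set k' : Fin r := ⟨(k : ℕ) + 1, hk1⟩
    have hkk' : k ≤ k' := by rw [Fin.le_def]; simp [k']
    -- μ k' = μ k + 1
    have hup : μ k' ≤ μ k + 1 := by
      have h1 : (lam k' : ℤ) ≤ (lam k : ℤ) := by exact_mod_cast hlam hkk'
      simp only [hμ]
      by_cases h2 : k ∈ s <;> by_cases h3 : k' ∈ s <;> simp [h2, h3] <;> omega
    have heq : μ k' = μ k + 1 := le_antisymm hup (by omega)
    apply Matrix.det_zero_of_column_eq (i := k) (j := k')
    · intro h
      apply absurd (congrArg Fin.val h)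
      simp [k']
    · intro i
      simp only [Matrix.of_apply]
      congr 1
      have : ((k' : ℕ) : ℤ) = ((k : ℕ) : ℤ) + 1 := by simp [k']
      omega

theorem stmt_10 (r : ℕ) (hr : 1 ≤ r)
    (e : ℕ → MvPolynomial (Fin r) ℚ)
    (he0 : e 0 = 1)
    (heX : ∀ i : Fin r, e ((i : ℕ) + 1) = MvPolynomial.X i)
    (heTop : ∀ i : ℕ, r < i → e i = 0)
    (h : ℤ → MvPolynomial (Fin r) ℚ)
    (hhneg : ∀ n : ℤ, n < 0 → h n = 0)
    (hconv : ∀ n : ℤ,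
      ∑ i ∈ Finset.range (r + 1),
          (-1 : MvPolynomial (Fin r) ℚ) ^ i * e i * h (n - (i : ℤ)) =
        if n = 0 then 1 else 0)
    (lam : Fin r → ℕ) (hlam : Antitone lam)
    (hv : ℤ → Polynomial (MvPolynomial (Fin r) ℚ))
    (hv0 : ∀ n : ℤ, n < 0 → hv n = 0)
    (hvdef : ∀ n : ℕ, hv (n : ℤ) =
      ∑ i ∈ Finset.range (n + 1), Polynomial.C (h ((n : ℤ) - (i : ℤ))) * Polynomial.X ^ i) :
    Polynomial.C (schurDet h (fun k => (lam k : ℤ))) =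
      ∑ j ∈ Finset.range (r + 1),
        (-1 : Polynomial (MvPolynomial (Fin r) ℚ)) ^ j * Polynomial.X ^ j * stripSumSub hv lam j := by
  classical
  -- key entry identity
  have key : ∀ n : ℤ, Polynomial.C (h n) = hv n + (-Polynomial.X) * hv (n - 1) := by
    intro n
    rcases lt_trichotomy n 0 with hn | hn | hn
    · rw [hhneg n hn, hv0 n hn, hv0 _ (by omega)]; simp
    · subst hn
      have h0 : hv ((0 : ℕ) : ℤ) = Polynomial.C (h 0) := by
        rw [hvdef 0]; norm_num
      norm_num at h0
      rw [show (0 : ℤ) - 1 = -1 by ring, hv0 (-1) (by norm_num), h0]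
      ring
    · obtain ⟨m, rfl⟩ : ∃ m : ℕ, n = ((m : ℕ) : ℤ) + 1 := by
        refine ⟨(n - 1).toNat, ?_⟩
        omega
      have h1 : hv (((m : ℕ) : ℤ) + 1) =
          ∑ i ∈ Finset.range (m + 1 + 1), Polynomial.C (h (((m : ℕ) : ℤ) + 1 - (i : ℤ)))
            * Polynomial.X ^ i := by
        have := hvdef (m + 1)
        push_cast at this
        convert this using 2
      have h2 : hv (((m : ℕ) : ℤ) + 1 - 1) =
          ∑ i ∈ Finset.range (m + 1), Polynomial.C (h ((m : ℤ) - (i : ℤ))) * Polynomial.X ^ i := by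
        have := hvdef m
        rw [show ((m : ℕ) : ℤ) + 1 - 1 = (m : ℤ) by ring, this]
      rw [h1, h2, Finset.sum_range_succ']
      have h3 : ∀ i ∈ Finset.range (m + 1),
          Polynomial.C (h (((m : ℕ) : ℤ) + 1 - ((i : ℤ) + 1))) * Polynomial.X ^ (i + 1)
            = Polynomial.X * (Polynomial.C (h ((m : ℤ) - (i : ℤ))) * Polynomial.X ^ i) := by
        intro i _
        rw [show ((m : ℕ) : ℤ) + 1 - ((i : ℤ) + 1) = (m : ℤ) - (i : ℤ) by ring]
        ring
      rw [Finset.sum_congr rfl fun i hi => by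
        push_cast
        exact h3 i hi]
      rw [← Finset.mul_sum]
      push_cast
      have hgen : ∀ (S Cc : Polynomial (MvPolynomial (Fin r) ℚ)),
          Polynomial.X * S + Cc * 1 + -Polynomial.X * S = Cc := by
        intro S Cc; ring
      exact (hgen _ _).symm
  set A : Fin r → (Fin r → Polynomial (MvPolynomial (Fin r) ℚ)) :=
    fun j i => hv ((lam j : ℤ) - ((j : ℕ) : ℤ) + ((i : ℕ) : ℤ)) with hA
  set B0 : Fin r → (Fin r → Polynomial (MvPolynomial (Fin r) ℚ)) :=
    fun j i => hv ((lam j : ℤ) - ((j : ℕ) : ℤ) + ((i : ℕ) : ℤ) - 1) with hB0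
  set d : MultilinearMap (Polynomial (MvPolynomial (Fin r) ℚ))
      (fun _ : Fin r => (Fin r → Polynomial (MvPolynomial (Fin r) ℚ)))
      (Polynomial (MvPolynomial (Fin r) ℚ)) :=
    (Matrix.detRowAlternating :
      (Fin r → Polynomial (MvPolynomial (Fin r) ℚ))
        [⋀^Fin r]→ₗ[Polynomial (MvPolynomial (Fin r) ℚ)]
        Polynomial (MvPolynomial (Fin r) ℚ)).toMultilinearMap with hd
  have hdet : ∀ M : Matrix (Fin r) (Fin r) (Polynomial (MvPolynomial (Fin r) ℚ)),
      M.det = d M := fun M => rfl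
  have lhs_eq : Polynomial.C (schurDet h (fun k => (lam k : ℤ)))
      = d ((fun j => (-Polynomial.X : Polynomial (MvPolynomial (Fin r) ℚ)) • B0 j) + A) := by
    simp only [schurDet]
    rw [RingHom.map_det, ← Matrix.det_transpose, hdet]
    congr 1
    funext j i
    show Polynomial.C (h ((lam j : ℤ) - ((j : ℕ) : ℤ) + ((i : ℕ) : ℤ))) = _
    rw [key]
    simp only [Pi.add_apply, Pi.smul_apply, smul_eq_mul, hA, hB0]
    ring
  rw [lhs_eq, d.map_add_univ]
  have step : ∀ s : Finset (Fin r),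
      d (s.piecewise (fun j => (-Polynomial.X : Polynomial (MvPolynomial (Fin r) ℚ)) • B0 j) A)
      = (-Polynomial.X : Polynomial (MvPolynomial (Fin r) ℚ)) ^ s.card *
          schurDet hv (fun k => (lam k : ℤ) - (if k ∈ s then 1 else 0)) := by
    intro s
    rw [my_piecewise_smul d (-Polynomial.X) B0 s A, smul_eq_mul]
    congr 1
    simp only [schurDet]
    rw [← Matrix.det_transpose, hdet]
    congr 1
    funext j i
    by_cases hj : j ∈ s
    · rw [Finset.piecewise_eq_of_mem _ _ _ hj]
      show hv _ = hv _
      rw [if_pos hj]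
      congr 1 <;> omega
    · rw [Finset.piecewise_eq_of_notMem _ _ _ hj]
      show hv _ = hv _
      rw [if_neg hj]
      congr 1 <;> omega
  rw [Finset.sum_congr rfl (fun s _ => step s)]
  rw [show (Finset.univ : Finset (Finset (Fin r))) =
      (Finset.univ : Finset (Fin r)).powerset from (Finset.powerset_univ).symm,
    Finset.sum_powerset, Finset.card_univ, Fintype.card_fin]
  refine Finset.sum_congr rfl fun j _ => ?_
  rw [stripSumSub, Finset.mul_sum]
  refine Finset.sum_congr rfl fun s hs => ?_
  have hcard : s.card = j := (Finset.mem_powersetCard.mp hs).2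
  by_cases hcond : (∀ k l : Fin r, k ≤ l →
        ((lam l : ℤ) - (if l ∈ s then 1 else 0)) ≤ ((lam k : ℤ) - (if k ∈ s then 1 else 0))) ∧
      (∀ k : Fin r, (0 : ℤ) ≤ (lam k : ℤ) - (if k ∈ s then 1 else 0))
  · rw [if_pos hcond, hcard]; ring
  · rw [if_neg hcond, my_vanish hr hv hv0 lam hlam s hcond, mul_zero, mul_zero]
end

section
/- Let s ≤ r and let i_1, …, i_s be positive integers. Suppose h_{i_1}·…·h_{i_s} = Σ_{λ} a_λ Δ_λ(H_r) is the expansion in the Schur basis, where λ ranges over partitions with at most r parts and a_λ ∈ ℚ. Then, with v an indeterminate, ∏_{j=1}^{s} (h_{i_j} − v·h_{i_j−1}) = Σ_{λ} a_λ · (Σ_{m=0}^{r} (−1)^m v^m Δ_{λ−m}(H_r)) in B_r[v]. (Equivalently, the ℚ-linear map on B_r defined on the Schur basis by Δ_λ(H_r) ↦ Σ_m (−1)^m v^m Δ_{λ−m}(H_r) is multiplicative on products of at most r of the elements h_n.) -/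
/-- Uniqueness of the solution to the convolution recurrence. -/
lemma convUnique {R : Type*} [CommRing R] (r : ℕ) (E : ℕ → R)
    (F G : ℤ → R)
    (hFneg : ∀ n : ℤ, n < 0 → F n = 0) (hGneg : ∀ n : ℤ, n < 0 → G n = 0)
    (hFc : ∀ n : ℤ, ∑ i ∈ Finset.range (r + 1), (-1 : R) ^ i * E i * F (n - (i : ℤ)) =
      if n = 0 then 1 else 0)
    (hGc : ∀ n : ℤ, ∑ i ∈ Finset.range (r + 1), (-1 : R) ^ i * E i * G (n - (i : ℤ)) =
      if n = 0 then 1 else 0)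
    (hE0 : E 0 = 1) : ∀ n : ℤ, F n = G n := by
  have key : ∀ k : ℕ, ∀ n : ℤ, n < (k : ℤ) → F n = G n := by
    intro k
    induction k with
    | zero => intro n hn; rw [hFneg n (by exact_mod_cast hn), hGneg n (by exact_mod_cast hn)]
    | succ k ih =>
      intro n hn
      rcases lt_or_ge n (k : ℤ) with h | h
      · exact ih n h
      have hnk : n = (k : ℤ) := by omega
      have hF := hFc n
      have hG := hGc n
      rw [Finset.sum_range_succ'] at hF hG
      simp only [pow_zero, one_mul, hE0, Nat.cast_zero, sub_zero] at hF hG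
      have hrw : ∀ i ∈ Finset.range r, (-1 : R) ^ (i+1) * E (i+1) * F (n - ((i:ℕ)+1 : ℕ)) =
          (-1 : R) ^ (i+1) * E (i+1) * G (n - ((i:ℕ)+1 : ℕ)) := by
        intro i _
        rw [ih (n - ((i:ℕ)+1 : ℕ)) (by push_cast; omega)]
      rw [Finset.sum_congr rfl hrw] at hF
      have := hF.trans hG.symm
      exact add_right_cancel (a := F n) (b := _) (c := G n) (by linear_combination this)
  intro n
  exact key (n.toNat + 1) n (by omega)

lemma antitone_of_adj {r : ℕ} (μ : Fin r → ℤ)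
    (h : ∀ (j : ℕ) (hj : j + 1 < r), μ ⟨j+1, hj⟩ ≤ μ ⟨j, by omega⟩) :
    ∀ k l : Fin r, k ≤ l → μ l ≤ μ k := by
  have step : ∀ (d : ℕ) (k : Fin r) (hd : k.1 + d < r), μ ⟨k.1 + d, hd⟩ ≤ μ k := by
    intro d
    induction d with
    | zero => intro k hd; exact le_of_eq (congrArg μ (Fin.ext rfl))
    | succ d ih =>
      intro k hd
      have he : (⟨k.1 + (d+1), hd⟩ : Fin r) = ⟨(k.1 + d) + 1, by omega⟩ := Fin.ext (by simp; omega)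
      rw [he]
      exact le_trans (h (k.1 + d) (by omega)) (ih k (by omega))
  intro k l hkl
  have hkl' : k.1 ≤ l.1 := hkl
  have : l = ⟨k.1 + (l.1 - k.1), by omega⟩ := Fin.ext (by simp; omega)
  rw [this]
  exact step _ k _

open Finset Matrix in
lemma detExpand {R : Type*} [CommRing R] {r : ℕ} (hr : 1 ≤ r) (a : ℤ → R)
    (haneg : ∀ n : ℤ, n < 0 → a n = 0) (c : R)
    (lam : Fin r → ℕ) (hlam : Antitone lam) :
    schurDet (fun n => a n - c * a (n - 1)) (fun k => (lam k : ℤ)) =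
      ∑ m ∈ Finset.range (r + 1), (-1 : R) ^ m * c ^ m * stripSumSub a lam m := by
  classical
  set N : Finset (Fin r) → Matrix (Fin r) (Fin r) R := fun s =>
    Matrix.of (fun i j : Fin r =>
      a ((lam j : ℤ) - (if j ∈ s then 1 else 0) - ((j : ℕ) : ℤ) + ((i : ℕ) : ℤ))) with hN
  -- Step 1: multilinear expansion
  have expand : schurDet (fun n => a n - c * a (n - 1)) (fun k => (lam k : ℤ)) =
      ∑ s : Finset (Fin r), (-c) ^ s.card * (N s).det := by
    rw [schurDet, ← Matrix.det_transpose]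
    have hrows : (Matrix.of fun i j : Fin r =>
        a ((lam j : ℤ) - ((j : ℕ) : ℤ) + ((i : ℕ) : ℤ)) -
          c * a ((lam j : ℤ) - ((j : ℕ) : ℤ) + ((i : ℕ) : ℤ) - 1))ᵀ =
        ((fun j : Fin r => (-c) • fun i : Fin r =>
            a ((lam j : ℤ) - 1 - ((j : ℕ) : ℤ) + ((i : ℕ) : ℤ))) +
          fun j : Fin r => fun i : Fin r =>
            a ((lam j : ℤ) - ((j : ℕ) : ℤ) + ((i : ℕ) : ℤ))) := by
      funext j i
      have harg : (lam j : ℤ) - ((j : ℕ) : ℤ) + ((i : ℕ) : ℤ) - 1 =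
          (lam j : ℤ) - 1 - ((j : ℕ) : ℤ) + ((i : ℕ) : ℤ) := by ring
      simp [Matrix.transpose_apply, harg]
      ring
    show Matrix.detRowAlternating _ = _
    rw [hrows, ← AlternatingMap.coe_multilinearMap, MultilinearMap.map_add_univ]
    refine Finset.sum_congr rfl fun s _ => ?_
    set u : Fin r → Fin r → R := fun j i => a ((lam j : ℤ) - ((j : ℕ) : ℤ) + ((i : ℕ) : ℤ))
    set w : Fin r → Fin r → R := fun j i => a ((lam j : ℤ) - 1 - ((j : ℕ) : ℤ) + ((i : ℕ) : ℤ))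
    have hpw : s.piecewise (fun j => (-c) • w j) u =
        s.piecewise (fun j => (-c) • (s.piecewise w u) j) (s.piecewise w u) := by
      funext j
      by_cases hj : j ∈ s
      · simp [Finset.piecewise_eq_of_mem _ _ _ hj]
      · simp [Finset.piecewise_eq_of_notMem _ _ _ hj]
    have hsm := MultilinearMap.map_piecewise_smul
      (Matrix.detRowAlternating (R := R) (n := Fin r)).toMultilinearMap
      (fun _ : Fin r => -c) (s.piecewise w u) s
    have hNs : s.piecewise w u = (N s)ᵀ := by
      funext j i
      by_cases hj : j ∈ s
      · simp only [Finset.piecewise_eq_of_mem _ _ _ hj, hN, Matrix.transpose_apply, Matrix.of_apply,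
          if_pos hj, w]
      · simp only [Finset.piecewise_eq_of_notMem _ _ _ hj, hN, Matrix.transpose_apply,
          Matrix.of_apply, if_neg hj, u, sub_zero]
    calc Matrix.detRowAlternating (s.piecewise (fun j => (-c) • w j) u)
        = (∏ _j ∈ s, (-c)) • Matrix.detRowAlternating (s.piecewise w u) := by
          rw [hpw]; exact hsm
      _ = (-c) ^ s.card * (N s).det := by
          rw [Finset.prod_const, hNs, smul_eq_mul]
          show (-c) ^ s.card * ((N s)ᵀ).det = _
          rw [Matrix.det_transpose]
  rw [expand]
  -- Step 2: reorganize the sum by cardinality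
  rw [← Finset.powerset_univ, Finset.powerset_card_disjiUnion]
  erw [Finset.sum_disjiUnion]
  rw [Finset.card_univ, Fintype.card_fin]
  refine Finset.sum_congr rfl fun m hm => ?_
  -- Step 3: per-cardinality identification
  rw [stripSumSub, Finset.mul_sum]
  refine Finset.sum_congr rfl fun s hs => ?_
  have hcard : s.card = m := (Finset.mem_powersetCard.mp hs).2
  rw [hcard, neg_pow]
  by_cases hcond : (∀ k l : Fin r, k ≤ l →
        ((lam l : ℤ) - (if l ∈ s then 1 else 0)) ≤ ((lam k : ℤ) - (if k ∈ s then 1 else 0))) ∧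
      (∀ k : Fin r, (0 : ℤ) ≤ (lam k : ℤ) - (if k ∈ s then 1 else 0))
  · rw [if_pos hcond]
    rfl
  · rw [if_neg hcond, mul_zero]
    have hdet : (N s).det = 0 := by
      set μ : Fin r → ℤ := fun k => (lam k : ℤ) - (if k ∈ s then 1 else 0) with hμ
      by_cases h1 : ∀ k l : Fin r, k ≤ l → μ l ≤ μ k
      · -- some part is negative; last column is zero
        have h2 : ¬ ∀ k : Fin r, (0 : ℤ) ≤ μ k := fun h2 => hcond ⟨h1, h2⟩
        push_neg at h2
        obtain ⟨k, hk⟩ := h2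
        have hjl : r - 1 < r := by omega
        set jl : Fin r := ⟨r - 1, hjl⟩
        have hkjl : μ jl ≤ μ k := h1 k jl (by change k.1 ≤ r - 1; omega)
        refine Matrix.det_eq_zero_of_column_eq_zero jl (fun i => ?_)
        have hi : (i : ℕ) < r := i.isLt
        have hite : (if jl ∈ s then (1:ℤ) else 0) = 0 ∨ (if jl ∈ s then (1:ℤ) else 0) = 1 := by
          split <;> simp
        refine haneg _ ?_
        have : μ jl = (lam jl : ℤ) - (if jl ∈ s then 1 else 0) := rfl
        show (lam jl : ℤ) - (if jl ∈ s then 1 else 0) - ((jl : ℕ) : ℤ) + ((i : ℕ) : ℤ) < 0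
        have hjlv : ((jl : ℕ) : ℤ) = ((r : ℤ) - 1) := by
          show ((r - 1 : ℕ) : ℤ) = (r : ℤ) - 1; omega
        omega
      · -- two adjacent equal columns
        push_neg at h1
        obtain ⟨k, l, hkl, hlt⟩ := h1
        have hadj : ¬ ∀ (j : ℕ) (hj : j + 1 < r), μ ⟨j+1, hj⟩ ≤ μ ⟨j, by omega⟩ := by
          intro hadj
          exact absurd (antitone_of_adj μ hadj k l hkl) (not_le.2 hlt)
        push_neg at hadj
        obtain ⟨j, hj, hgt⟩ := hadj
        set k0 : Fin r := ⟨j, by omega⟩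
        set k1 : Fin r := ⟨j + 1, hj⟩
        have hlam01 : lam k1 ≤ lam k0 := hlam (by change j ≤ j + 1; omega)
        have ht0 : (if k0 ∈ s then (1:ℤ) else 0) = 0 ∨ (if k0 ∈ s then (1:ℤ) else 0) = 1 := by
          split <;> simp
        have ht1 : (if k1 ∈ s then (1:ℤ) else 0) = 0 ∨ (if k1 ∈ s then (1:ℤ) else 0) = 1 := by
          split <;> simp
        have hμ0 : μ k0 = (lam k0 : ℤ) - (if k0 ∈ s then 1 else 0) := rfl
        have hμ1 : μ k1 = (lam k1 : ℤ) - (if k1 ∈ s then 1 else 0) := rfl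
        refine Matrix.det_zero_of_column_eq (i := k0) (j := k1) (by simp [k0, k1, Fin.ext_iff]) ?_
        intro i
        show a ((lam k0 : ℤ) - (if k0 ∈ s then 1 else 0) - ((k0 : ℕ) : ℤ) + ((i : ℕ) : ℤ)) =
          a ((lam k1 : ℤ) - (if k1 ∈ s then 1 else 0) - ((k1 : ℕ) : ℤ) + ((i : ℕ) : ℤ))
        congr 1
        have hv0 : ((k0 : ℕ) : ℤ) = (j : ℤ) := rfl
        have hv1 : ((k1 : ℕ) : ℤ) = (j : ℤ) + 1 := by exact_mod_cast rfl
        omega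
    rw [hdet, mul_zero]

open MvPolynomial Finset

/-- The map sending the generators to elementary symmetric polynomials. -/
noncomputable def psiMap (r : ℕ) : MvPolynomial (Fin r) ℚ →ₐ[ℚ] MvPolynomial (Fin r) ℚ :=
  aeval (fun i : Fin r => esymm (Fin r) ℚ ((i : ℕ) + 1))

lemma psiMap_inj (r : ℕ) : Function.Injective (psiMap r) := by
  intro p q hpq
  refine esymmAlgHom_fin_injective (R := ℚ) (n := r) (m := r) le_rfl (Subtype.ext ?_)
  rw [esymmAlgHom_apply, esymmAlgHom_apply]
  exact hpq

/-- Setting the last variable to zero. -/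
noncomputable def pzero (r : ℕ) (hr : 1 ≤ r) : MvPolynomial (Fin r) ℚ →ₐ[ℚ] MvPolynomial (Fin r) ℚ :=
  aeval (fun j : Fin r => if j = ⟨r - 1, by omega⟩ then 0 else X j)

/-- Elementary symmetric polynomials in the first `r-1` variables. -/
noncomputable def Eprime (r : ℕ) (hr : 1 ≤ r) (i : ℕ) : MvPolynomial (Fin r) ℚ :=
  ∑ t ∈ powersetCard i ((univ : Finset (Fin r)).erase ⟨r - 1, by omega⟩), ∏ j ∈ t, X j

lemma Eprime_zero (r : ℕ) (hr : 1 ≤ r) : Eprime r hr 0 = 1 := by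
  simp [Eprime]

lemma Eprime_top (r : ℕ) (hr : 1 ≤ r) : Eprime r hr r = 0 := by
  rw [Eprime, Finset.powersetCard_eq_empty.mpr, Finset.sum_empty]
  rw [Finset.card_erase_of_mem (mem_univ _), Finset.card_univ, Fintype.card_fin]
  omega

lemma esymm_rec (r : ℕ) (hr : 1 ≤ r) (i : ℕ) :
    esymm (Fin r) ℚ (i + 1) =
      Eprime r hr (i + 1) + X (⟨r - 1, by omega⟩ : Fin r) * Eprime r hr i := by
  classical
  set l : Fin r := ⟨r - 1, by omega⟩
  have hins : (univ : Finset (Fin r)) = insert l (univ.erase l) :=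
    (Finset.insert_erase (mem_univ l)).symm
  rw [esymm, hins, Finset.powersetCard_succ_insert (Finset.notMem_erase l univ)]
  have hdisj : Disjoint (powersetCard (i + 1) ((univ : Finset (Fin r)).erase l))
      ((powersetCard i ((univ : Finset (Fin r)).erase l)).image (insert l)) := by
    rw [Finset.disjoint_left]
    intro t ht hmem
    obtain ⟨t', ht', rfl⟩ := Finset.mem_image.mp hmem
    have : l ∈ insert l t' := Finset.mem_insert_self _ _
    have hsub := (Finset.mem_powersetCard.mp ht).1
    exact Finset.notMem_erase l univ (hsub this)
  rw [Finset.sum_union hdisj]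
  have himg : ∑ t ∈ (powersetCard i ((univ : Finset (Fin r)).erase l)).image (insert l),
      ∏ j ∈ t, (X j : MvPolynomial (Fin r) ℚ) =
      ∑ t ∈ powersetCard i ((univ : Finset (Fin r)).erase l), ∏ j ∈ insert l t, X j := by
    refine Finset.sum_image ?_
    intro x hx y hy hxy
    have hlx : l ∉ x := fun hl => Finset.notMem_erase l univ
      ((Finset.mem_powersetCard.mp hx).1 hl)
    have hly : l ∉ y := fun hl => Finset.notMem_erase l univ
      ((Finset.mem_powersetCard.mp hy).1 hl)
    rw [← Finset.erase_insert hlx, ← Finset.erase_insert hly, hxy]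
  rw [himg]
  have hprod : ∀ t ∈ powersetCard i ((univ : Finset (Fin r)).erase l),
      ∏ j ∈ insert l t, (X j : MvPolynomial (Fin r) ℚ) = X l * ∏ j ∈ t, X j := by
    intro t ht
    refine Finset.prod_insert ?_
    exact fun hl => Finset.notMem_erase l univ ((Finset.mem_powersetCard.mp ht).1 hl)
  rw [Finset.sum_congr rfl hprod, ← Finset.mul_sum]
  rfl

lemma pzero_Eprime (r : ℕ) (hr : 1 ≤ r) (i : ℕ) :
    pzero r hr (Eprime r hr i) = Eprime r hr i := by
  rw [Eprime, map_sum]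
  refine Finset.sum_congr rfl fun t ht => ?_
  rw [map_prod]
  refine Finset.prod_congr rfl fun j hj => ?_
  have hjl : j ≠ ⟨r - 1, by omega⟩ :=
    Finset.ne_of_mem_erase ((Finset.mem_powersetCard.mp ht).1 hj)
  simp [pzero, hjl]

lemma pzero_esymm (r : ℕ) (hr : 1 ≤ r) (i : ℕ) :
    pzero r hr (esymm (Fin r) ℚ i) = Eprime r hr i := by
  cases i with
  | zero => simp [Eprime_zero]
  | succ i =>
    rw [esymm_rec r hr i, map_add, map_mul, pzero_Eprime, pzero_Eprime]
    have : pzero r hr (X (⟨r - 1, by omega⟩ : Fin r)) = 0 := by simp [pzero]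
    rw [this, zero_mul, add_zero]

lemma removeVar (r : ℕ) (hr : 1 ≤ r) (H : ℤ → MvPolynomial (Fin r) ℚ)
    (hneg : ∀ n : ℤ, n < 0 → H n = 0)
    (hc : ∀ n : ℤ, ∑ i ∈ Finset.range (r + 1),
        (-1 : MvPolynomial (Fin r) ℚ) ^ i * esymm (Fin r) ℚ i * H (n - (i : ℤ)) =
      if n = 0 then 1 else 0) :
    ∀ n : ℤ, H n - X (⟨r - 1, by omega⟩ : Fin r) * H (n - 1) = pzero r hr (H n) := by
  set l : Fin r := ⟨r - 1, by omega⟩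
  set Ep : ℕ → MvPolynomial (Fin r) ℚ := fun i =>
    match i with
    | 0 => 0
    | (j + 1) => Eprime r hr j
    with hEp
  have hesymm : ∀ i : ℕ, esymm (Fin r) ℚ i = Eprime r hr i + X l * Ep i := by
    intro i
    cases i with
    | zero =>
      rw [esymm_zero, Eprime_zero]
      show (1 : MvPolynomial (Fin r) ℚ) = 1 + X l * 0
      ring
    | succ j => rw [esymm_rec r hr j]
  set U : ℤ → MvPolynomial (Fin r) ℚ := fun n =>
    ∑ i ∈ Finset.range (r + 1), (-1 : MvPolynomial (Fin r) ℚ) ^ i * Eprime r hr i * H (n - (i : ℤ))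
    with hU
  have keyU : ∀ n : ℤ, U n - X l * U (n - 1) = if n = 0 then 1 else 0 := by
    intro n
    have h1 := hc n
    have h2 : ∑ i ∈ Finset.range (r + 1),
        (-1 : MvPolynomial (Fin r) ℚ) ^ i * esymm (Fin r) ℚ i * H (n - (i : ℤ)) =
        U n + X l * ∑ i ∈ Finset.range (r + 1),
          (-1 : MvPolynomial (Fin r) ℚ) ^ i * Ep i * H (n - (i : ℤ)) := by
      rw [hU, Finset.mul_sum, ← Finset.sum_add_distrib]
      refine Finset.sum_congr rfl fun i _ => ?_
      rw [hesymm i]; ring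
    have h3 : ∑ i ∈ Finset.range (r + 1),
        (-1 : MvPolynomial (Fin r) ℚ) ^ i * Ep i * H (n - (i : ℤ)) = - U (n - 1) := by
      rw [Finset.sum_range_succ']
      have hz : (-1 : MvPolynomial (Fin r) ℚ) ^ 0 * Ep 0 * H (n - ((0 : ℕ) : ℤ)) = 0 := by
        simp [hEp]
      rw [hz, add_zero]
      have hu : U (n - 1) = ∑ i ∈ Finset.range r,
          (-1 : MvPolynomial (Fin r) ℚ) ^ i * Eprime r hr i * H (n - 1 - (i : ℤ)) := by
        show ∑ i ∈ Finset.range (r + 1),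
          (-1 : MvPolynomial (Fin r) ℚ) ^ i * Eprime r hr i * H (n - 1 - (i : ℤ)) = _
        rw [Finset.sum_range_succ, Eprime_top]
        simp
      rw [hu, ← Finset.sum_neg_distrib]
      refine Finset.sum_congr rfl fun i _ => ?_
      have harg : n - ((i : ℕ) + 1 : ℕ) = n - 1 - (i : ℤ) := by push_cast; ring
      rw [harg]
      ring
    rw [h2, h3] at h1
    rw [← h1]; ring
  refine convUnique r (Eprime r hr) _ _ ?_ ?_ ?_ ?_ (Eprime_zero r hr)
  · intro n hn
    rw [hneg n hn, hneg (n - 1) (by omega)]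
    ring
  · intro n hn
    rw [hneg n hn, map_zero]
  · intro n
    have : ∑ i ∈ Finset.range (r + 1), (-1 : MvPolynomial (Fin r) ℚ) ^ i * Eprime r hr i *
        (H (n - (i : ℤ)) - X l * H (n - (i : ℤ) - 1)) = U n - X l * U (n - 1) := by
      rw [hU, Finset.mul_sum, ← Finset.sum_sub_distrib]
      refine Finset.sum_congr rfl fun i _ => ?_
      have harg : n - 1 - (i : ℤ) = n - (i : ℤ) - 1 := by ring
      rw [harg]
      ring
    rw [this, keyU n]
  · intro n
    have := congrArg (pzero r hr) (hc n)
    rw [map_sum] at this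
    have hterm : ∀ i ∈ Finset.range (r + 1),
        pzero r hr ((-1 : MvPolynomial (Fin r) ℚ) ^ i * esymm (Fin r) ℚ i * H (n - (i : ℤ))) =
        (-1 : MvPolynomial (Fin r) ℚ) ^ i * Eprime r hr i * pzero r hr (H (n - (i : ℤ))) := by
      intro i _
      rw [map_mul, map_mul, map_pow, map_neg, map_one, pzero_esymm]
    rw [Finset.sum_congr rfl hterm] at this
    rw [this]
    split_ifs <;> simp

theorem stmt_11 (r : ℕ) (hr : 1 ≤ r)
    (e : ℕ → MvPolynomial (Fin r) ℚ)
    (he0 : e 0 = 1)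
    (heX : ∀ i : Fin r, e ((i : ℕ) + 1) = MvPolynomial.X i)
    (heTop : ∀ i : ℕ, r < i → e i = 0)
    (h : ℤ → MvPolynomial (Fin r) ℚ)
    (hhneg : ∀ n : ℤ, n < 0 → h n = 0)
    (hconv : ∀ n : ℤ,
      ∑ i ∈ Finset.range (r + 1),
          (-1 : MvPolynomial (Fin r) ℚ) ^ i * e i * h (n - (i : ℤ)) =
        if n = 0 then 1 else 0)
    (s : ℕ) (hs : s ≤ r)
    (idx : Fin s → ℕ) (hidx : ∀ j, 0 < idx j)
    (Λ : Finset (Fin r → ℕ)) (hΛ : ∀ lam ∈ Λ, Antitone lam)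
    (aQ : (Fin r → ℕ) → ℚ)
    (hexp : (∏ j : Fin s, h ((idx j : ℕ) : ℤ)) =
      ∑ lam ∈ Λ, MvPolynomial.C (aQ lam) * schurDet h (fun k => (lam k : ℤ))) :
    (∏ j : Fin s, (Polynomial.C (h ((idx j : ℕ) : ℤ)) -
        Polynomial.X * Polynomial.C (h (((idx j : ℕ) : ℤ) - 1)))) =
      ∑ lam ∈ Λ, Polynomial.C ((MvPolynomial.C (aQ lam) : MvPolynomial (Fin r) ℚ)) *
        ∑ m ∈ Finset.range (r + 1),
          (-1 : Polynomial (MvPolynomial (Fin r) ℚ)) ^ m * Polynomial.X ^ m *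
            Polynomial.C (stripSumSub h lam m) := by
  classical
  set l : Fin r := ⟨r - 1, by omega⟩ with hl
  set ψ : MvPolynomial (Fin r) ℚ →ₐ[ℚ] MvPolynomial (Fin r) ℚ := psiMap r with hψdef
  set Hh : ℤ → MvPolynomial (Fin r) ℚ := fun n => ψ (h n) with hHh
  -- ψ sends e i to esymm i
  have hψe : ∀ i : ℕ, i ≤ r → ψ (e i) = esymm (Fin r) ℚ i := by
    intro i hi
    match i with
    | 0 => rw [he0, map_one, esymm_zero]
    | (j + 1) =>
      have hj : j < r := by omega
      have hx := heX ⟨j, hj⟩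
      simp only [Fin.val_mk] at hx
      rw [hx]
      simp [hψdef, psiMap]
  have hHneg : ∀ n : ℤ, n < 0 → Hh n = 0 := by
    intro n hn; rw [hHh]; simp only [hhneg n hn, map_zero]
  have hHc : ∀ n : ℤ, ∑ i ∈ Finset.range (r + 1),
      (-1 : MvPolynomial (Fin r) ℚ) ^ i * esymm (Fin r) ℚ i * Hh (n - (i : ℤ)) =
      if n = 0 then 1 else 0 := by
    intro n
    have hmap := congrArg ψ (hconv n)
    rw [map_sum] at hmap
    have hterm : ∀ i ∈ Finset.range (r + 1),
        ψ ((-1 : MvPolynomial (Fin r) ℚ) ^ i * e i * h (n - (i : ℤ))) =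
        (-1 : MvPolynomial (Fin r) ℚ) ^ i * esymm (Fin r) ℚ i * Hh (n - (i : ℤ)) := by
      intro i hi
      rw [map_mul, map_mul, map_pow, map_neg, map_one, hψe i (by simp at hi; omega)]
    rw [Finset.sum_congr rfl hterm] at hmap
    rw [hmap]
    split_ifs <;> simp
  have hP1 : ∀ n : ℤ, Hh n - X l * Hh (n - 1) = pzero r hr (Hh n) :=
    removeVar r hr Hh hHneg hHc
  have hψC : ∀ q : ℚ, ψ (MvPolynomial.C q) = MvPolynomial.C q := by
    intro q
    rw [hψdef]
    simp [psiMap, algebraMap_eq]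
  -- ψ commutes with schurDet
  have hmapdet : ∀ (φ : MvPolynomial (Fin r) ℚ →ₐ[ℚ] MvPolynomial (Fin r) ℚ)
      (b : ℤ → MvPolynomial (Fin r) ℚ) (μ : Fin r → ℤ),
      φ (schurDet b μ) = schurDet (fun n => φ (b n)) μ := by
    intro φ b μ
    rw [schurDet, AlgHom.map_det]
    rfl
  have hψstrip : ∀ (lam : Fin r → ℕ) (m : ℕ),
      ψ (stripSumSub h lam m) = stripSumSub Hh lam m := by
    intro lam m
    rw [stripSumSub, stripSumSub, map_sum]
    refine Finset.sum_congr rfl fun S _ => ?_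
    rw [apply_ite ψ, map_zero]
    exact if_congr Iff.rfl (hmapdet ψ h _) rfl
  -- the two polynomials
  set L : Polynomial (MvPolynomial (Fin r) ℚ) :=
    ∏ j : Fin s, (Polynomial.C (h ((idx j : ℕ) : ℤ)) -
      Polynomial.X * Polynomial.C (h (((idx j : ℕ) : ℤ) - 1))) with hL
  set Rp : Polynomial (MvPolynomial (Fin r) ℚ) :=
    ∑ lam ∈ Λ, Polynomial.C ((MvPolynomial.C (aQ lam) : MvPolynomial (Fin r) ℚ)) *
      ∑ m ∈ Finset.range (r + 1),
        (-1 : Polynomial (MvPolynomial (Fin r) ℚ)) ^ m * Polynomial.X ^ m *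
          Polynomial.C (stripSumSub h lam m) with hRp
  show L = Rp
  have hinj : Function.Injective (Polynomial.map ψ.toRingHom) :=
    Polynomial.map_injective ψ.toRingHom (psiMap_inj r)
  refine hinj ?_
  -- the two mapped polynomials
  have hLmap : L.map ψ.toRingHom = ∏ j : Fin s, (Polynomial.C (Hh ((idx j : ℕ) : ℤ)) -
      Polynomial.X * Polynomial.C (Hh (((idx j : ℕ) : ℤ) - 1))) := by
    rw [hL, Polynomial.map_prod]
    refine Finset.prod_congr rfl fun j _ => ?_
    rw [Polynomial.map_sub, Polynomial.map_mul, Polynomial.map_C, Polynomial.map_C,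
      Polynomial.map_X]
    rfl
  have hRmap : Rp.map ψ.toRingHom = ∑ lam ∈ Λ, Polynomial.C
      ((MvPolynomial.C (aQ lam) : MvPolynomial (Fin r) ℚ)) *
      ∑ m ∈ Finset.range (r + 1),
        (-1 : Polynomial (MvPolynomial (Fin r) ℚ)) ^ m * Polynomial.X ^ m *
          Polynomial.C (stripSumSub Hh lam m) := by
    rw [hRp, Polynomial.map_sum]
    refine Finset.sum_congr rfl fun lam _ => ?_
    rw [Polynomial.map_mul, Polynomial.map_C, Polynomial.map_sum]
    rw [show (ψ.toRingHom) (MvPolynomial.C (aQ lam)) = MvPolynomial.C (aQ lam) from hψC _]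
    congr 1
    refine Finset.sum_congr rfl fun m _ => ?_
    rw [Polynomial.map_mul, Polynomial.map_mul, Polynomial.map_pow, Polynomial.map_pow,
      Polynomial.map_C, Polynomial.map_X]
    rw [show (ψ.toRingHom) (stripSumSub h lam m) = stripSumSub Hh lam m from hψstrip lam m]
    simp
  set P : Polynomial (MvPolynomial (Fin r) ℚ) := L.map ψ.toRingHom - Rp.map ψ.toRingHom with hP
  have hsub : P = 0 := by
    set z : Fin (r + 1) → MvPolynomial (Fin r) ℚ := fun k =>
      if hk : (k : ℕ) = 0 then 0 else X (⟨(k : ℕ) - 1, by omega⟩ : Fin r) with hz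
    have hzinj : Function.Injective z := by
      intro k k' hkk
      simp only [hz] at hkk
      by_cases h1 : (k : ℕ) = 0 <;> by_cases h2 : (k' : ℕ) = 0
      · exact Fin.ext (by omega)
      · rw [dif_pos h1, dif_neg h2] at hkk
        exact absurd hkk.symm (X_ne_zero _)
      · rw [dif_neg h1, dif_pos h2] at hkk
        exact absurd hkk (X_ne_zero _)
      · rw [dif_neg h1, dif_neg h2] at hkk
        have := X_injective hkk
        rw [Fin.mk.injEq] at this
        exact Fin.ext (by omega)
    -- degree bound
    have hdeg : P.natDegree < Fintype.card (Fin (r + 1)) := by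
      rw [Fintype.card_fin]
      have hLdeg : (L.map ψ.toRingHom).natDegree ≤ r := by
        rw [hLmap]
        refine le_trans (Polynomial.natDegree_prod_le _ _) ?_
        refine le_trans (Finset.sum_le_sum (g := fun _ => 1) fun j _ => ?_) ?_
        · refine le_trans (Polynomial.natDegree_sub_le _ _) ?_
          simp only [Polynomial.natDegree_C, max_le_iff]
          constructor
          · omega
          · refine le_trans (Polynomial.natDegree_mul_le) ?_
            simp [Polynomial.natDegree_X, Polynomial.natDegree_C]
        · simp only [Finset.sum_const, Finset.card_univ, Fintype.card_fin, smul_eq_mul, mul_one]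
          omega
      have hRdeg : (Rp.map ψ.toRingHom).natDegree ≤ r := by
        rw [hRmap]
        refine le_trans (Polynomial.natDegree_sum_le_of_forall_le _ _ fun lam _ => ?_) le_rfl
        refine le_trans (Polynomial.natDegree_mul_le) ?_
        simp only [Polynomial.natDegree_C, zero_add]
        refine Polynomial.natDegree_sum_le_of_forall_le _ _ fun m hm => ?_
        refine le_trans (Polynomial.natDegree_mul_le) ?_
        refine le_trans (add_le_add (Polynomial.natDegree_mul_le)
          (le_of_eq (Polynomial.natDegree_C _))) ?_
        simp only [add_zero]
        have h1 : ((-1 : Polynomial (MvPolynomial (Fin r) ℚ)) ^ m).natDegree = 0 := by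
          simp [Polynomial.natDegree_pow]
        have h2 : ((Polynomial.X : Polynomial (MvPolynomial (Fin r) ℚ)) ^ m).natDegree = m := by
          simp [Polynomial.natDegree_pow]
        rw [h1, h2, zero_add]
        simp only [Finset.mem_range] at hm
        omega
      refine lt_of_le_of_lt (le_trans (Polynomial.natDegree_sub_le _ _) ?_) (by omega : r < r + 1)
      exact max_le hLdeg hRdeg
    -- evaluations
    have hevalL : ∀ t : MvPolynomial (Fin r) ℚ, (L.map ψ.toRingHom).eval t =
        ∏ j : Fin s, (Hh ((idx j : ℕ) : ℤ) - t * Hh (((idx j : ℕ) : ℤ) - 1)) := by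
      intro t
      rw [hLmap, Polynomial.eval_prod]
      refine Finset.prod_congr rfl fun j _ => ?_
      simp only [Polynomial.eval_sub, Polynomial.eval_mul, Polynomial.eval_C, Polynomial.eval_X]
    have hevalR : ∀ t : MvPolynomial (Fin r) ℚ, (Rp.map ψ.toRingHom).eval t =
        ∑ lam ∈ Λ, MvPolynomial.C (aQ lam) *
          ∑ m ∈ Finset.range (r + 1),
            (-1 : MvPolynomial (Fin r) ℚ) ^ m * t ^ m * stripSumSub Hh lam m := by
      intro t
      rw [hRmap, Polynomial.eval_finset_sum]
      refine Finset.sum_congr rfl fun lam _ => ?_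
      rw [Polynomial.eval_mul, Polynomial.eval_C, Polynomial.eval_finset_sum]
      congr 1
      refine Finset.sum_congr rfl fun m _ => ?_
      simp only [Polynomial.eval_mul, Polynomial.eval_pow, Polynomial.eval_C, Polynomial.eval_X,
        Polynomial.eval_neg, Polynomial.eval_one]
    -- mapped expansion
    have hexpψ : (∏ j : Fin s, Hh ((idx j : ℕ) : ℤ)) =
        ∑ lam ∈ Λ, MvPolynomial.C (aQ lam) * schurDet Hh (fun k => ((lam k : ℕ) : ℤ)) := by
      have := congrArg ψ hexp
      rw [map_prod, map_sum] at this
      rw [show (∏ j : Fin s, Hh ((idx j : ℕ) : ℤ)) = ∏ j : Fin s, ψ (h ((idx j : ℕ) : ℤ)) from rfl]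
      rw [this]
      refine Finset.sum_congr rfl fun lam _ => ?_
      rw [map_mul, hψC, hmapdet ψ h]
    -- evaluation at zero
    have heval0 : P.eval 0 = 0 := by
      rw [hP, Polynomial.eval_sub, sub_eq_zero, hevalL, hevalR]
      have hstrip0 : ∀ lam ∈ Λ, stripSumSub Hh lam 0 = schurDet Hh (fun k => ((lam k : ℕ) : ℤ)) := by
        intro lam hlam
        rw [stripSumSub, Finset.powersetCard_zero, Finset.sum_singleton]
        simp only [Finset.notMem_empty, if_false, sub_zero]
        rw [if_pos]
        constructor
        · intro k' l' hkl
          exact_mod_cast hΛ lam hlam hkl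
        · intro k'
          positivity
      have hz0 : ∀ lam ∈ Λ, ∑ m ∈ Finset.range (r + 1),
          (-1 : MvPolynomial (Fin r) ℚ) ^ m * (0 : MvPolynomial (Fin r) ℚ) ^ m *
            stripSumSub Hh lam m = schurDet Hh (fun k => ((lam k : ℕ) : ℤ)) := by
        intro lam hlam
        rw [Finset.sum_eq_single_of_mem 0 (Finset.mem_range.mpr (by omega))]
        · rw [pow_zero, pow_zero, one_mul, one_mul, hstrip0 lam hlam]
        · intro m _ hm
          rw [zero_pow hm, mul_zero, zero_mul]
      simp only [zero_mul, sub_zero]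
      rw [hexpψ]
      refine Finset.sum_congr rfl fun lam hlam => ?_
      rw [hz0 lam hlam]
    -- evaluation at the last variable
    have hevall : P.eval (X l) = 0 := by
      rw [hP, Polynomial.eval_sub, sub_eq_zero, hevalL, hevalR]
      have hkey : ∀ lam ∈ Λ, ∑ m ∈ Finset.range (r + 1),
          (-1 : MvPolynomial (Fin r) ℚ) ^ m * (X l) ^ m * stripSumSub Hh lam m =
          pzero r hr (schurDet Hh (fun k => ((lam k : ℕ) : ℤ))) := by
        intro lam hlam
        rw [← detExpand hr Hh hHneg (X l) lam (hΛ lam hlam)]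
        have hfun : (fun n : ℤ => Hh n - X l * Hh (n - 1)) = fun n => pzero r hr (Hh n) := by
          funext n; exact hP1 n
        rw [hfun, ← hmapdet (pzero r hr) Hh]
      calc ∏ j : Fin s, (Hh ((idx j : ℕ) : ℤ) - X l * Hh (((idx j : ℕ) : ℤ) - 1))
          = ∏ j : Fin s, pzero r hr (Hh ((idx j : ℕ) : ℤ)) := by
            refine Finset.prod_congr rfl fun j _ => ?_
            exact hP1 _
        _ = pzero r hr (∏ j : Fin s, Hh ((idx j : ℕ) : ℤ)) := (map_prod _ _ _).symm
        _ = pzero r hr (∑ lam ∈ Λ, MvPolynomial.C (aQ lam) *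
              schurDet Hh (fun k => ((lam k : ℕ) : ℤ))) := by rw [hexpψ]
        _ = ∑ lam ∈ Λ, MvPolynomial.C (aQ lam) *
              pzero r hr (schurDet Hh (fun k => ((lam k : ℕ) : ℤ))) := by
            rw [map_sum]
            refine Finset.sum_congr rfl fun lam _ => ?_
            rw [map_mul]
            congr 1
            rw [show (MvPolynomial.C (aQ lam) : MvPolynomial (Fin r) ℚ) =
              algebraMap ℚ _ (aQ lam) from rfl, AlgHom.commutes]
        _ = _ := by
            refine Finset.sum_congr rfl fun lam hlam => ?_
            rw [hkey lam hlam]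
    -- evaluation at every variable, by symmetry
    have hevalX : ∀ k : Fin r, P.eval (X k) = 0 := by
      intro k
      set σe : Equiv.Perm (Fin r) := Equiv.swap k l with hσe
      have hren : ∀ p : MvPolynomial (Fin r) ℚ, rename σe (ψ p) = ψ p := by
        intro p
        have hcomp : (rename (σ := Fin r) (τ := Fin r) ⇑σe).comp ψ = ψ := by
          refine MvPolynomial.algHom_ext fun i => ?_
          rw [AlgHom.comp_apply, hψdef]
          show rename σe (psiMap r (X i)) = psiMap r (X i)
          rw [psiMap, aeval_X, rename_esymm]
        exact congrFun (congrArg (fun f => f.toFun) hcomp) p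
      have hmapP : P.map (rename (σ := Fin r) (τ := Fin r) ⇑σe).toRingHom = P := by
        rw [hP, Polynomial.map_sub, Polynomial.map_map, Polynomial.map_map]
        have : (rename (σ := Fin r) (τ := Fin r) ⇑σe).toRingHom.comp ψ.toRingHom = ψ.toRingHom :=
          RingHom.ext hren
        rw [this]
      set φr : MvPolynomial (Fin r) ℚ →+* MvPolynomial (Fin r) ℚ :=
        (rename (σ := Fin r) (τ := Fin r) ⇑σe).toRingHom with hφr
      have hcommute : φr (P.eval (X k)) = (P.map φr).eval (φr (X k)) := by
        rw [Polynomial.eval_map]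
        have h1 := Polynomial.hom_eval₂ P (RingHom.id _) φr (X k)
        rw [RingHom.comp_id] at h1
        exact h1
      have hXk : φr (X k) = X l := by
        show rename (σ := Fin r) (τ := Fin r) ⇑σe (X k) = X l
        rw [rename_X]
        congr 1
        exact Equiv.swap_apply_left k l
      have hfin : φr (P.eval (X k)) = 0 := by
        rw [hcommute, hmapP, hXk, hevall]
      have hrinj : Function.Injective φr :=
        rename_injective (R := ℚ) ⇑σe (Equiv.injective σe)
      apply hrinj
      rw [hfin, map_zero]
    -- put roots together
    refine Polynomial.eq_zero_of_natDegree_lt_card_of_eval_eq_zero P hzinj ?_ hdeg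
    intro k
    simp only [hz]
    by_cases hk : (k : ℕ) = 0
    · rw [dif_pos hk]; exact heval0
    · rw [dif_neg hk]; exact hevalX _
  have := sub_eq_zero.mp hsub
  exact this
end

section
/- Let λ = (λ_1 ≥ … ≥ λ_r ≥ 0) be a partition with at most r parts. For n ∈ ℤ let H(λ+n) denote the determinant of the r×r matrix whose first row has entries h_{λ_i + 1 − i + n} (i = 1, …, r) and whose k-th row, for 2 ≤ k ≤ r, has entries h_{λ_i + k − i} (i = 1, …, r). Then for every n ≥ 1, H(λ+n) + (−1)^r h_{n−r} Δ_{(λ_1+1, …, λ_r+1)}(H_r) = 0 in B_r. -/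
noncomputable def matM12 {r : ℕ} (h : ℤ → MvPolynomial (Fin r) ℚ) (lam : Fin r → ℕ) (n : ℤ) :
    Matrix (Fin r) (Fin r) (MvPolynomial (Fin r) ℚ) :=
  Matrix.of fun k i : Fin r =>
    if (k : ℕ) = 0 then h ((lam i : ℤ) - ((i : ℕ) : ℤ) + n)
    else h ((lam i : ℤ) - ((i : ℕ) : ℤ) + ((k : ℕ) : ℤ))

lemma det_updateRow_sum12 {R : Type*} [CommRing R] {n : ℕ} (M : Matrix (Fin n) (Fin n) R)
    (i : Fin n) {α : Type*} [DecidableEq α] (s : Finset α) (v : α → Fin n → R) :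
    (M.updateRow i (∑ a ∈ s, v a)).det = ∑ a ∈ s, (M.updateRow i (v a)).det := by
  induction s using Finset.induction_on with
  | empty =>
      simp only [Finset.sum_empty]
      exact Matrix.det_eq_zero_of_row_eq_zero i (fun j => by simp)
  | insert _ _ ha ih =>
      rw [Finset.sum_insert ha, Finset.sum_insert ha, Matrix.det_updateRow_add, ih]

noncomputable def matM12' {P : Type*} [CommRing P] {r : ℕ} (h : ℤ → P) (lam : Fin r → ℕ) (n : ℤ) :
    Matrix (Fin r) (Fin r) P :=
  Matrix.of fun k i : Fin r =>
    if (k : ℕ) = 0 then h ((lam i : ℤ) - ((i : ℕ) : ℤ) + n)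
    else h ((lam i : ℤ) - ((i : ℕ) : ℤ) + ((k : ℕ) : ℤ))

theorem key12 {P : Type*} [CommRing P] (s : ℕ)
    (e : ℕ → P)
    (he0 : e 0 = 1)
    (h : ℤ → P)
    (hhneg : ∀ n : ℤ, n < 0 → h n = 0)
    (hconv : ∀ n : ℤ,
      ∑ i ∈ Finset.range (s + 1 + 1),
          (-1 : P) ^ i * e i * h (n - (i : ℤ)) =
        if n = 0 then 1 else 0)
    (lam : Fin (s+1) → ℕ) :
    ∀ m : ℕ,
      (matM12' h lam ((m : ℤ) + 1)).det +
        (-1 : P) ^ (s+1) * h ((m : ℤ) + 1 - ((s+1 : ℕ) : ℤ)) *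
          schurDet h (fun k => (lam k : ℤ) + 1) = 0 := by
  set Δ := schurDet h (fun k => (lam k : ℤ) + 1) with hΔ
  -- h 0 = 1
  have h0 : h 0 = 1 := by
    have H := hconv 0
    rw [Finset.sum_range_succ'] at H
    simp only [pow_zero, he0, one_mul, Nat.cast_zero, sub_zero, if_pos rfl] at H
    rw [Finset.sum_eq_zero, zero_add] at H
    · exact H
    · intro i _
      rw [hhneg _ (by push_cast; omega), mul_zero]
  -- Lemma A
  have hA : ∀ m : ℤ, 0 < m →
      h m = ∑ j ∈ Finset.range (s+1), (-1 : P)^j * e (j+1) * h (m - ((j : ℤ) + 1)) := by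
    intro m hm
    have H := hconv m
    rw [Finset.sum_range_succ', if_neg (by omega)] at H
    simp only [pow_zero, he0, one_mul, Nat.cast_zero, sub_zero] at H
    push_cast at H
    have key : ∀ i ∈ Finset.range (s+1),
        (-1 : P)^(i+1) * e (i+1) * h (m - ((i : ℤ) + 1))
          = -((-1 : P)^i * e (i+1) * h (m - ((i : ℤ) + 1))) := fun i _ => by ring
    rw [Finset.sum_congr rfl key] at H
    rw [Finset.sum_neg_distrib] at H
    linear_combination H
  intro m
  induction m using Nat.strong_induction_on with
  | _ m IH =>
  rcases lt_trichotomy (m+1) (s+1) with hc | hc | hc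
  · -- small case: duplicate rows
    have hz : h ((m : ℤ) + 1 - ((s+1 : ℕ) : ℤ)) = 0 := hhneg _ (by push_cast; omega)
    rw [hz, mul_zero, zero_mul, add_zero]
    apply Matrix.det_zero_of_row_eq (i := (⟨0, by omega⟩ : Fin (s+1)))
      (j := (⟨m+1, hc⟩ : Fin (s+1)))
    · simp [Fin.ext_iff]
    · funext i
      simp only [matM12', Matrix.of_apply]
      rw [if_pos trivial, if_neg (by omega)]
      norm_cast
  · -- m + 1 = s + 1, i.e. m = s
    have hm : m = s := by omega
    subst m
    have hrot : ∀ ρ : Fin (s+1), ((finRotate (s+1)) ρ : ℕ) = if (ρ:ℕ) = s then 0 else (ρ:ℕ)+1 := by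
      intro ρ
      rw [finRotate_succ_apply, Fin.val_add_one]
      simp [Fin.ext_iff, Fin.val_last]
    have hAM : (Matrix.of fun i j : Fin (s+1) =>
          h (((lam j : ℤ) + 1) - ((j : ℕ) : ℤ) + ((i : ℕ) : ℤ)))
        = (matM12' h lam ((s : ℤ) + 1)).submatrix (finRotate (s+1)) id := by
      funext ρ i
      have hv := hrot ρ
      simp only [Matrix.submatrix_apply, Matrix.of_apply, id, matM12']
      rcases eq_or_ne (ρ : ℕ) s with hs | hs
      · rw [if_pos hs] at hv
        rw [hv, if_pos rfl]
        congr 1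
        omega
      · rw [if_neg hs] at hv
        rw [hv, if_neg (by omega)]
        congr 1
        push_cast [hv]
        ring
    have hdet : Δ = ((Equiv.Perm.sign (finRotate (s+1)) : ℤ) : P) * (matM12' h lam ((s : ℤ) + 1)).det := by
      rw [hΔ, schurDet, hAM, Matrix.det_permute]
    rw [sign_finRotate, Nat.add_sub_cancel] at hdet
    have hsgn : (((((-1 : ℤˣ))^s : ℤˣ) : ℤ) : P) = (-1 : P)^s := by push_cast; ring
    rw [hsgn] at hdet
    have harg : (s : ℤ) + 1 - ((s+1 : ℕ) : ℤ) = 0 := by push_cast; ring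
    rw [harg, h0, mul_one]
    have h1 : (-1 : P)^s * (-1 : P)^s = 1 := by rw [← mul_pow]; simp
    have hD : (matM12' h lam ((s : ℤ) + 1)).det = (-1 : P)^s * Δ := by
      rw [hdet, ← mul_assoc, h1, one_mul]
    rw [hD, pow_succ]
    ring
  · -- inductive step: m ≥ s + 1
    -- value of determinants at lower arguments
    have hDj : ∀ j : ℕ, j < m →
        (matM12' h lam ((m : ℤ) - (j : ℤ))).det
          = -((-1 : P)^(s+1) * h ((m : ℤ) - (j : ℤ) - ((s+1 : ℕ) : ℤ)) * Δ) := by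
      intro j hj
      have H := IH (m - 1 - j) (by omega)
      have harg : ((m - 1 - j : ℕ) : ℤ) + 1 = (m : ℤ) - (j : ℤ) := by omega
      rw [harg] at H
      linear_combination H
    -- expand first row
    have hpos : ∀ i : Fin (s+1), (0 : ℤ) < (lam i : ℤ) - ((i : ℕ) : ℤ) + ((m : ℤ) + 1) := by
      intro i
      have := i.isLt
      omega
    have hrow : ∀ j : ℕ, (matM12' h lam ((m:ℤ)+1)).updateRow ⟨0, by omega⟩
          (fun i : Fin (s+1) => h ((lam i : ℤ) - ((i : ℕ) : ℤ) + ((m : ℤ) - (j : ℤ))))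
        = matM12' h lam ((m : ℤ) - (j : ℤ)) := by
      intro j
      funext k i
      rcases eq_or_ne k (⟨0, by omega⟩ : Fin (s+1)) with rfl | hk
      · rw [Matrix.updateRow_self]
        simp only [matM12', Matrix.of_apply]
        rw [if_pos trivial]
      · rw [Matrix.updateRow_ne hk]
        have hk' : (k : ℕ) ≠ 0 := fun h0 => hk (Fin.ext h0)
        simp only [matM12', Matrix.of_apply, if_neg hk']
    have hexp : matM12' h lam ((m:ℤ)+1) = (matM12' h lam ((m:ℤ)+1)).updateRow ⟨0, by omega⟩
        (∑ j ∈ Finset.range (s+1), ((-1:P)^j * e (j+1)) •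
          (fun i : Fin (s+1) => h ((lam i : ℤ) - ((i : ℕ) : ℤ) + ((m : ℤ) - (j : ℤ))))) := by
      funext k i
      rcases eq_or_ne k (⟨0, by omega⟩ : Fin (s+1)) with rfl | hk
      · rw [Matrix.updateRow_self]
        simp only [matM12', Matrix.of_apply]
        rw [if_pos trivial, hA _ (hpos i)]
        rw [Finset.sum_apply]
        apply Finset.sum_congr rfl
        intro j _
        simp only [Pi.smul_apply, smul_eq_mul]
        rw [show (lam i : ℤ) - ((i : ℕ) : ℤ) + ((m : ℤ) + 1) - ((j : ℤ) + 1)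
            = (lam i : ℤ) - ((i : ℕ) : ℤ) + ((m : ℤ) - (j : ℤ)) from by ring]
      · rw [Matrix.updateRow_ne hk]
    -- compute the determinant
    have hsum : (matM12' h lam ((m:ℤ)+1)).det
        = ∑ j ∈ Finset.range (s+1),
            (-1:P)^j * e (j+1) * -((-1 : P)^(s+1) * h (((m : ℤ) - (s : ℤ)) - ((j:ℤ)+1)) * Δ) := by
      rw [hexp, det_updateRow_sum12]
      apply Finset.sum_congr rfl
      intro j hj
      rw [Matrix.det_updateRow_smul, hrow j, hDj j (by simp at hj; omega)]
      have harg : (m : ℤ) - (j:ℤ) - ((s+1 : ℕ) : ℤ) = ((m:ℤ) - (s:ℤ)) - ((j:ℤ)+1) := by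
        push_cast; ring
      rw [harg, mul_assoc]
    have hA' := hA ((m:ℤ) - (s:ℤ)) (by omega)
    have hfold : ∑ j ∈ Finset.range (s+1),
          (-1:P)^j * e (j+1) * -((-1 : P)^(s+1) * h (((m : ℤ) - (s : ℤ)) - ((j:ℤ)+1)) * Δ)
        = -((-1 : P)^(s+1) * Δ) * ∑ j ∈ Finset.range (s+1),
            (-1:P)^j * e (j+1) * h (((m : ℤ) - (s : ℤ)) - ((j:ℤ)+1)) := by
      rw [Finset.mul_sum]
      apply Finset.sum_congr rfl
      intro j _
      ring
    have harg2 : (m : ℤ) + 1 - ((s+1 : ℕ) : ℤ) = (m:ℤ) - (s:ℤ) := by push_cast; ring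
    rw [hsum, hfold, ← hA', harg2]
    ring

theorem stmt_12 (r : ℕ) (hr : 1 ≤ r)
    (e : ℕ → MvPolynomial (Fin r) ℚ)
    (he0 : e 0 = 1)
    (heX : ∀ i : Fin r, e ((i : ℕ) + 1) = MvPolynomial.X i)
    (heTop : ∀ i : ℕ, r < i → e i = 0)
    (h : ℤ → MvPolynomial (Fin r) ℚ)
    (hhneg : ∀ n : ℤ, n < 0 → h n = 0)
    (hconv : ∀ n : ℤ,
      ∑ i ∈ Finset.range (r + 1),
          (-1 : MvPolynomial (Fin r) ℚ) ^ i * e i * h (n - (i : ℤ)) =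
        if n = 0 then 1 else 0)
    (lam : Fin r → ℕ) (hlam : Antitone lam) :
    ∀ n : ℤ, 1 ≤ n →
      Matrix.det (Matrix.of fun k i : Fin r =>
        if (k : ℕ) = 0 then h ((lam i : ℤ) - ((i : ℕ) : ℤ) + n)
        else h ((lam i : ℤ) - ((i : ℕ) : ℤ) + ((k : ℕ) : ℤ))) +
      (-1 : MvPolynomial (Fin r) ℚ) ^ r * h (n - (r : ℤ)) * schurDet h (fun k => (lam k : ℤ) + 1) = 0 := by
  obtain ⟨s, rfl⟩ : ∃ s, r = s + 1 := ⟨r - 1, by omega⟩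
  intro n hn
  obtain ⟨m, rfl⟩ : ∃ m : ℕ, n = (m : ℤ) + 1 := ⟨(n - 1).toNat, by omega⟩
  exact key12 s e he0 h hhneg hconv lam m
end

section
/- Let λ = (λ_1 ≥ … ≥ λ_r ≥ 0) be a partition with at most r parts and let v be an indeterminate. Define h∨_n := Σ_{i=0}^{n} h_{n−i} v^i ∈ B_r[v] for n ≥ 0 and h∨_n := 0 for n < 0, and for n ≥ 0 let H(λ−n) denote the determinant of the r×r matrix whose first row has entries h_{λ_i + 1 − i − n} (i = 1, …, r) and whose k-th row, for 2 ≤ k ≤ r, has entries h_{λ_i + k − i}. Then Δ_λ(H∨) = Σ_{n=0}^{λ_1} v^n H(λ−n) in B_r[v], where Δ_λ(H∨) := det(h∨_{λ_j − j + i})_{1≤i,j≤r}. -/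
private lemma det_updateRow_finsetSum {R : Type*} [CommRing R] {n : Type*} [DecidableEq n]
    [Fintype n] (A : Matrix n n R) (j : n) {α : Type*} (s : Finset α) (f : α → n → R) :
    (A.updateRow j (∑ a ∈ s, f a)).det = ∑ a ∈ s, (A.updateRow j (f a)).det := by
  classical
  induction s using Finset.induction_on with
  | empty =>
      rw [Finset.sum_empty, Finset.sum_empty]
      exact Matrix.det_eq_zero_of_row_eq_zero j (fun k => by simp)
  | insert _ _ hx ih =>
      rw [Finset.sum_insert hx, Finset.sum_insert hx, Matrix.det_updateRow_add, ih]

theorem stmt_13 (r : ℕ) (hr : 1 ≤ r)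
    (e : ℕ → MvPolynomial (Fin r) ℚ)
    (he0 : e 0 = 1)
    (heX : ∀ i : Fin r, e ((i : ℕ) + 1) = MvPolynomial.X i)
    (heTop : ∀ i : ℕ, r < i → e i = 0)
    (h : ℤ → MvPolynomial (Fin r) ℚ)
    (hhneg : ∀ n : ℤ, n < 0 → h n = 0)
    (hconv : ∀ n : ℤ,
      ∑ i ∈ Finset.range (r + 1),
          (-1 : MvPolynomial (Fin r) ℚ) ^ i * e i * h (n - (i : ℤ)) =
        if n = 0 then 1 else 0)
    (lam : Fin r → ℕ) (hlam : Antitone lam)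
    (hv : ℤ → Polynomial (MvPolynomial (Fin r) ℚ))
    (hv0 : ∀ n : ℤ, n < 0 → hv n = 0)
    (hvdef : ∀ n : ℕ, hv (n : ℤ) =
      ∑ i ∈ Finset.range (n + 1), Polynomial.C (h ((n : ℤ) - (i : ℤ))) * Polynomial.X ^ i) :
    schurDet hv (fun k => (lam k : ℤ)) =
      ∑ n ∈ Finset.range (lam ⟨0, hr⟩ + 1),
        Polynomial.X ^ n * Polynomial.C
          (Matrix.det (Matrix.of fun k i : Fin r =>
            if (k : ℕ) = 0 then h ((lam i : ℤ) - ((i : ℕ) : ℤ) - (n : ℤ))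
            else h ((lam i : ℤ) - ((i : ℕ) : ℤ) + ((k : ℕ) : ℤ)))) := by
  classical
  obtain ⟨m, rfl⟩ : ∃ m, r = m + 1 := ⟨r - 1, by omega⟩
  -- the basic recurrence h∨_n = h_n + v · h∨_{n-1}
  have hrec : ∀ n : ℤ, hv n = Polynomial.C (h n) + Polynomial.X * hv (n - 1) := by
    intro n
    rcases lt_or_ge n 0 with hn | hn
    · rw [hv0 n hn, hv0 (n - 1) (by omega), hhneg n hn]; simp
    · obtain ⟨a, rfl⟩ := Int.eq_ofNat_of_zero_le hn
      cases a with
      | zero =>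
          rw [show ((0 : ℕ) : ℤ) - 1 = -1 by norm_num, hv0 (-1) (by norm_num), hvdef 0]
          simp
      | succ k =>
          rw [hvdef (k + 1), Finset.sum_range_succ',
            show ((k + 1 : ℕ) : ℤ) - 1 = (k : ℤ) by push_cast; ring, hvdef k,
            Finset.mul_sum]
          have e1 : ∀ i ∈ Finset.range (k + 1),
              Polynomial.C (h (((k + 1 : ℕ) : ℤ) - ((i + 1 : ℕ) : ℤ))) *
                  Polynomial.X ^ (i + 1) =
                Polynomial.X * (Polynomial.C (h ((k : ℤ) - (i : ℤ))) * Polynomial.X ^ i) := by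
            intro i _
            rw [show ((k + 1 : ℕ) : ℤ) - ((i + 1 : ℕ) : ℤ) = (k : ℤ) - (i : ℤ) by
              push_cast; ring, pow_succ]
            ring
          rw [Finset.sum_congr rfl e1,
            show Polynomial.C (h (((k + 1 : ℕ) : ℤ) - ((0 : ℕ) : ℤ))) * Polynomial.X ^ 0 =
              Polynomial.C (h ((k + 1 : ℕ) : ℤ)) by norm_num]
          exact add_comm _ _
  set N := lam ⟨0, hr⟩ with hN
  -- expansion of h∨_z as a sum up to N, whenever z ≤ N
  have hvN : ∀ z : ℤ, z ≤ (N : ℤ) →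
      hv z = ∑ n ∈ Finset.range (N + 1), Polynomial.X ^ n * Polynomial.C (h (z - n)) := by
    intro z hz
    rcases lt_or_ge z 0 with hzn | hzn
    · rw [hv0 z hzn, Finset.sum_eq_zero]
      intro n _
      rw [hhneg (z - n) (by omega), map_zero, mul_zero]
    · obtain ⟨a, rfl⟩ := Int.eq_ofNat_of_zero_le hzn
      have ha : a ≤ N := by exact_mod_cast hz
      rw [hvdef a,
        Finset.sum_subset (Finset.range_mono (by omega : a + 1 ≤ N + 1))
          (fun i _ hni => by
            simp only [Finset.mem_range, not_lt] at hni
            rw [hhneg ((a : ℤ) - i) (by omega), map_zero, zero_mul])]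
      exact Finset.sum_congr rfl fun i _ => mul_comm _ _
  -- the matrix with `h` entries in every row
  set M : Matrix (Fin (m + 1)) (Fin (m + 1)) (Polynomial (MvPolynomial (Fin (m + 1)) ℚ)) :=
    Matrix.of (fun i j : Fin (m + 1) =>
      Polynomial.C (h ((lam j : ℤ) - ((j : ℕ) : ℤ) + ((i : ℕ) : ℤ)))) with hM
  have step1 : schurDet hv (fun k => (lam k : ℤ)) =
      (M.updateRow 0 (fun j => hv ((lam j : ℤ) - ((j : ℕ) : ℤ)))).det := by
    show Matrix.det _ = _
    apply Matrix.det_eq_of_forall_row_eq_smul_add_pred (fun _ => Polynomial.X)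
    · intro j
      simp
    · intro i j
      simp only [Matrix.of_apply, Matrix.updateRow_ne (Fin.succ_ne_zero i), hM, Fin.val_succ,
        Fin.coe_castSucc, Nat.cast_add, Nat.cast_one]
      rw [show (lam j : ℤ) - ((j : ℕ) : ℤ) + ((i : ℕ) + 1) =
          ((lam j : ℤ) - ((j : ℕ) : ℤ) + (i : ℕ)) + 1 by ring, hrec]
      simp
  rw [step1]
  have hrow : (fun j : Fin (m + 1) => hv ((lam j : ℤ) - ((j : ℕ) : ℤ))) =
      ∑ n ∈ Finset.range (N + 1),
        (fun j : Fin (m + 1) =>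
          Polynomial.X ^ n * Polynomial.C (h ((lam j : ℤ) - ((j : ℕ) : ℤ) - (n : ℤ)))) := by
    funext j
    have hle : lam j ≤ N := hlam (show (⟨0, hr⟩ : Fin (m + 1)) ≤ j by
      simp [Fin.le_def])
    rw [hvN ((lam j : ℤ) - ((j : ℕ) : ℤ)) (by omega), Finset.sum_apply]
  rw [hrow, det_updateRow_finsetSum]
  apply Finset.sum_congr rfl
  intro n _
  rw [show (fun j : Fin (m + 1) =>
        Polynomial.X ^ n * Polynomial.C (h ((lam j : ℤ) - ((j : ℕ) : ℤ) - (n : ℤ))))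
      = (Polynomial.X ^ n : Polynomial (MvPolynomial (Fin (m + 1)) ℚ)) •
        (fun j : Fin (m + 1) =>
          Polynomial.C (h ((lam j : ℤ) - ((j : ℕ) : ℤ) - (n : ℤ)))) from rfl,
    Matrix.det_updateRow_smul]
  congr 1
  rw [RingHom.map_det]
  congr 1
  ext k j : 1
  by_cases hk : k = 0
  · subst hk
    simp [Matrix.map_apply]
  · have hk' : (k : ℕ) ≠ 0 := fun h0 => hk (Fin.ext (by simp [h0]))
    rw [Matrix.updateRow_ne hk]
    simp [Matrix.map_apply, hM, hk', hk]
end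

section
/- (Pieri formula) For every 0 ≤ j ≤ r and every partition λ = (λ_1 ≥ … ≥ λ_r ≥ 0) with at most r parts, e_j · Δ_λ(H_r) = Δ_{λ+j}(H_r) in B_r, where Δ_{λ+j}(H_r) is the sum of Δ_μ(H_r) over all partitions μ = (λ_1 + i_1, …, λ_r + i_r) with each i_k ∈ {0,1}, Σ i_k = j, and μ nonincreasing. -/
open Classical in
/-- `Δ_{λ+j}(a)`: sum of `Δ_μ(a)` over all partitions obtained from `λ` by
adding a vertical strip of size `j`. -/
noncomputable def stripSumAdd {R : Type*} [CommRing R] {r : ℕ} (a : ℤ → R) (lam : Fin r → ℕ)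
    (j : ℕ) : R :=
  ∑ S ∈ Finset.powersetCard j (Finset.univ : Finset (Fin r)),
    if (∀ k l : Fin r, k ≤ l →
          ((lam l : ℤ) + (if l ∈ S then 1 else 0)) ≤ ((lam k : ℤ) + (if k ∈ S then 1 else 0)))
    then schurDet a (fun k => (lam k : ℤ) + (if k ∈ S then 1 else 0))
    else 0

/-! ### Auxiliary lemmas -/

open Polynomial Finset Matrix Equiv

/-- companion-style matrix whose determinant is `∑ f m X^m`. -/
noncomputable def compMat {R : Type*} [CommRing R] (f : ℕ → R) (n : ℕ) :
    Matrix (Fin n) (Fin n) (Polynomial R) :=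
  Matrix.of fun i k : Fin n =>
    (if (k : ℕ) = (i : ℕ) then 1 else 0) +
      Polynomial.X * (if (i : ℕ) + 1 = n then
        (-1 : Polynomial R) ^ (n - (k : ℕ) + 1) * Polynomial.C (f (n - (k : ℕ)))
      else if (k : ℕ) = (i : ℕ) + 1 then 1 else 0)

lemma det_compMat {R : Type*} [CommRing R] (f : ℕ → R) :
    ∀ n : ℕ, (compMat f n).det =
      ∑ m ∈ Finset.range (n + 1), Polynomial.C (if m = 0 then 1 else f m) * Polynomial.X ^ m
  | 0 => by
      simp [Matrix.det_isEmpty]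
  | 1 => by
      rw [Matrix.det_fin_one]
      simp [compMat, Finset.sum_range_succ]
  | (n+2) => by
      have IH := det_compMat f (n+1)
      rw [show (n+2) = (n+1).succ from rfl, Matrix.det_succ_column_zero]
      have h0l : (0 : Fin (n+2)) ≠ Fin.last (n+1) := by
        intro h
        have := congrArg Fin.val h
        simp [Fin.val_last] at this
      rw [← Finset.sum_subset (Finset.subset_univ ({0, Fin.last (n+1)} : Finset (Fin (n+2))))
        (by
          intro i _ hi
          simp only [Finset.mem_insert, Finset.mem_singleton, not_or] at hi
          obtain ⟨h0, hl⟩ := hi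
          have h0' : (0 : ℕ) ≠ (i : ℕ) := fun h => h0 (Fin.ext h.symm)
          have hl' : (i : ℕ) ≠ n + 1 := by
            intro h
            exact hl (Fin.ext (by simpa [Fin.val_last] using h))
          have : compMat f (n+2) i 0 = 0 := by
            simp [compMat, h0', hl']
          rw [this]; ring), Finset.sum_pair h0l]
      -- term at 0
      have hsub0 : (compMat f (n+2)).submatrix (Fin.succAbove 0) Fin.succ = compMat f (n+1) := by
        rw [Fin.succAbove_zero]
        ext a b
        simp only [submatrix_apply, compMat, of_apply, Fin.val_succ]
        have h1 : ((b:ℕ)+1 = (a:ℕ)+1) ↔ ((b:ℕ) = (a:ℕ)) := by omega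
        have h2 : ((a:ℕ)+1+1 = n+2) ↔ ((a:ℕ)+1 = n+1) := by omega
        have h3 : (n+2) - ((b:ℕ)+1) = (n+1) - (b:ℕ) := by omega
        have h4 : ((b:ℕ)+1 = (a:ℕ)+1+1) ↔ ((b:ℕ) = (a:ℕ)+1) := by omega
        rw [h3]
        simp only [h1, h2, h4]
      have hM00 : compMat f (n+2) 0 0 = 1 := by
        simp [compMat]
        try omega
      -- term at last
      have hMl0 : compMat f (n+2) (Fin.last (n+1)) 0 =
          Polynomial.X * ((-1 : Polynomial R)^(n+3) * Polynomial.C (f (n+2))) := by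
        simp [compMat, Fin.val_last]
        try norm_num
      have hsubl : ((compMat f (n+2)).submatrix ((Fin.last (n+1)).succAbove) Fin.succ).det
          = Polynomial.X ^ (n+1) := by
        have hentry : ∀ a b : Fin (n+1),
            (compMat f (n+2)).submatrix ((Fin.last (n+1)).succAbove) Fin.succ a b
              = (if (b:ℕ)+1 = (a:ℕ) then 1 else 0)
                + Polynomial.X * (if (b:ℕ) = (a:ℕ) then 1 else 0) := by
          intro a b
          rw [Fin.succAbove_last]
          simp only [submatrix_apply, compMat, of_apply, Fin.val_succ, Fin.coe_castSucc]
          have h2 : ¬((a:ℕ)+1 = n+2) := by omega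
          have h4 : ((b:ℕ)+1 = (a:ℕ)+1) ↔ ((b:ℕ) = (a:ℕ)) := by omega
          simp only [h2, if_false, h4]
        rw [Matrix.det_of_lowerTriangular _ (by
          intro a b hab
          rw [hentry]
          have h1 : ¬((b:ℕ)+1 = (a:ℕ)) := by
            have : (a:ℕ) < (b:ℕ) := hab
            omega
          have h2 : ¬((b:ℕ) = (a:ℕ)) := by
            have : (a:ℕ) < (b:ℕ)  := hab
            omega
          simp [h1, h2])]
        have hdiag : ∀ a : Fin (n+1),
            ((compMat f (n+2)).submatrix ((Fin.last (n+1)).succAbove) Fin.succ) a a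
              = Polynomial.X := by
          intro a
          rw [hentry a a, if_neg (by omega), if_pos rfl]
          ring
        rw [show (∏ a : Fin (n+1), ((compMat f (n+2)).submatrix ((Fin.last (n+1)).succAbove) Fin.succ) a a) = ∏ _a : Fin (n+1), (Polynomial.X : Polynomial R) from Finset.prod_congr rfl fun a _ => hdiag a]
        simp [Finset.card_univ]
      rw [hsub0, hM00, hMl0, hsubl, IH, Fin.val_last, Fin.val_zero]
      conv_rhs => rw [Finset.sum_range_succ]
      have hne : ¬(n+2 = 0) := by omega
      rw [if_neg hne]
      have hsgn : (-1 : Polynomial R)^(n+1) * ((-1 : Polynomial R)^(n+3)) = 1 := by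
        rw [← pow_add, show (n+1)+(n+3) = 2*(n+2) by ring, pow_mul]
        norm_num
      have hsgn' : ((-1:Polynomial R)^(n+1) * (Polynomial.X * ((-1 : Polynomial R)^(n+3) * Polynomial.C (f (n+2)))) * Polynomial.X^(n+1)) = Polynomial.C (f (n+2)) * Polynomial.X^(n+2) := by
        have h5 : ((-1:Polynomial R)^(n+1) * (Polynomial.X * ((-1 : Polynomial R)^(n+3) * Polynomial.C (f (n+2)))) * Polynomial.X^(n+1)) = ((-1:Polynomial R)^(n+1) * ((-1 : Polynomial R)^(n+3))) * (Polynomial.C (f (n+2)) * Polynomial.X^(n+2)) := by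
          ring
        rw [h5, hsgn, one_mul]
      rw [hsgn', pow_zero, one_mul, one_mul]

lemma schurDet_eq_zero {R : Type*} [CommRing R] {r : ℕ} (a : ℤ → R) (mu : Fin r → ℤ)
    (p q : Fin r) (hpq : p ≠ q) (hcol : mu p - ((p:ℕ):ℤ) = mu q - ((q:ℕ):ℤ)) :
    schurDet a mu = 0 := by
  unfold schurDet
  exact Matrix.det_zero_of_column_eq hpq (fun k => by
    show a (mu p - ((p:ℕ):ℤ) + k) = a (mu q - ((q:ℕ):ℤ) + k)
    rw [hcol])

open Classical in
lemma stripSumAdd_eq {R : Type*} [CommRing R] {r : ℕ} (a : ℤ → R) (lam : Fin r → ℕ)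
    (hlam : Antitone lam) (j : ℕ) :
    stripSumAdd a lam j = ∑ S ∈ Finset.powersetCard j (Finset.univ : Finset (Fin r)),
      schurDet a (fun k => (lam k : ℤ) + (if k ∈ S then 1 else 0)) := by
  unfold stripSumAdd
  apply Finset.sum_congr rfl
  intro S _
  split_ifs with hcond
  · rfl
  · symm
    push_neg at hcond
    obtain ⟨k, l, hkl, hlt⟩ := hcond
    have hkl' : k < l := by
      rcases lt_or_eq_of_le hkl with hc | hc
      · exact hc
      · subst hc; exact absurd hlt (lt_irrefl _)
    have hlk : lam l ≤ lam k := hlam hkl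
    have hkS : k ∉ S := by
      intro hk
      by_cases hl : l ∈ S <;> simp only [hk, hl, if_true, if_false] at hlt <;> omega
    have hlS : l ∈ S := by
      by_cases hl : l ∈ S
      · exact hl
      · simp only [hkS, hl, if_false] at hlt; omega
    have hll : lam k = lam l := by
      simp only [hkS, hlS, if_true, if_false] at hlt; omega
    have hTne : (S.filter (fun m => k ≤ m)).Nonempty := ⟨l, Finset.mem_filter.2 ⟨hlS, hkl⟩⟩
    set m1 := (S.filter (fun m => k ≤ m)).min' hTne with hm1
    have hm1mem := (S.filter (fun m => k ≤ m)).min'_mem hTne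
    rw [Finset.mem_filter] at hm1mem
    have hm1S : m1 ∈ S := hm1mem.1
    have hkm1 : k ≤ m1 := hm1mem.2
    have hm1l : m1 ≤ l := Finset.min'_le _ l (Finset.mem_filter.2 ⟨hlS, hkl⟩)
    have hkm1' : k < m1 := lt_of_le_of_ne hkm1 (fun hc => hkS (hc ▸ hm1S))
    have hkm1v : (k:ℕ) < (m1:ℕ) := hkm1'
    have hm1r : (m1:ℕ) < r := m1.isLt
    set p : Fin r := ⟨(m1:ℕ) - 1, by omega⟩ with hp
    have hpv : (p:ℕ) = (m1:ℕ) - 1 := rfl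
    have hpm1 : p < m1 := by rw [Fin.lt_def]; omega
    have hkp : k ≤ p := by rw [Fin.le_def]; rw [hpv]; omega
    have hpS : p ∉ S := by
      intro hmem
      have : m1 ≤ p := Finset.min'_le _ p (Finset.mem_filter.2 ⟨hmem, hkp⟩)
      exact absurd hpm1 (not_lt.2 this)
    have hpl : p ≤ l := le_trans (le_of_lt hpm1) hm1l
    have hlamp : lam p = lam k := le_antisymm (hlam hkp) (by rw [hll]; exact hlam hpl)
    have hlamm1 : lam m1 = lam k := le_antisymm (hlam hkm1) (by rw [hll]; exact hlam hm1l)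
    apply schurDet_eq_zero _ _ p m1 (ne_of_lt hpm1)
    rw [if_neg hpS, if_pos hm1S, hlamp, hlamm1]
    have hv : (m1:ℕ) = (p:ℕ) + 1 := by omega
    omega

lemma det_add_X {R : Type*} [CommRing R] {r : ℕ} (u v : Fin r → Fin r → R) :
    Matrix.det (Matrix.of fun i c : Fin r => Polynomial.C (u i c) + Polynomial.X * Polynomial.C (v i c))
      = ∑ t ∈ (Finset.univ : Finset (Fin r)).powerset, Polynomial.X ^ t.card *
          Polynomial.C (Matrix.det (Matrix.of fun i c => if c ∈ t then v i c else u i c)) := by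
  classical
  rw [Matrix.det_apply']
  have step1 : ∀ σ : Perm (Fin r),
      ((Perm.sign σ : ℤ) : R[X]) * ∏ c, (Matrix.of fun i c : Fin r =>
          Polynomial.C (u i c) + Polynomial.X * Polynomial.C (v i c)) (σ c) c
        = ∑ t ∈ (Finset.univ : Finset (Fin r)).powerset,
            Polynomial.X ^ t.card * Polynomial.C ((Perm.sign σ : ℤ) *
              ((∏ c ∈ t, v (σ c) c) * ∏ c ∈ Finset.univ \ t, u (σ c) c)) := by
    intro σ
    have hprod : ∏ c, (Matrix.of fun i c : Fin r =>
          Polynomial.C (u i c) + Polynomial.X * Polynomial.C (v i c)) (σ c) c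
        = ∑ t ∈ (Finset.univ : Finset (Fin r)).powerset,
            (∏ c ∈ t, Polynomial.X * Polynomial.C (v (σ c) c)) *
              ∏ c ∈ Finset.univ \ t, Polynomial.C (u (σ c) c) := by
      rw [Finset.prod_congr rfl (fun c _ => by
        show (Polynomial.C (u (σ c) c) + Polynomial.X * Polynomial.C (v (σ c) c)) = _
        exact add_comm _ _), Finset.prod_add]
    rw [hprod, Finset.mul_sum]
    apply Finset.sum_congr rfl
    intro t _
    rw [Finset.prod_mul_distrib, Finset.prod_const]
    rw [← map_prod Polynomial.C (fun x => v (σ x) x) t,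
      ← map_prod Polynomial.C (fun x => u (σ x) x) (Finset.univ \ t), _root_.map_mul, _root_.map_mul,
      Polynomial.C_eq_intCast]
    ring
  rw [Finset.sum_congr rfl (fun σ _ => step1 σ), Finset.sum_comm]
  apply Finset.sum_congr rfl
  intro t _
  rw [← Finset.mul_sum]
  congr 1
  have hps : ∀ σ : Perm (Fin r),
      ∏ c, (Matrix.of fun i c : Fin r => if c ∈ t then v i c else u i c) (σ c) c
        = (∏ c ∈ t, v (σ c) c) * ∏ c ∈ Finset.univ \ t, u (σ c) c := by
    intro σ
    rw [show (∏ c, (Matrix.of fun i c : Fin r => if c ∈ t then v i c else u i c) (σ c) c)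
        = ∏ c, (if c ∈ t then v (σ c) c else u (σ c) c) from rfl, Finset.prod_ite,
      Finset.filter_mem_eq_inter, Finset.univ_inter]
    congr 1
    rw [← Finset.sdiff_eq_filter]
  rw [Matrix.det_apply', map_sum Polynomial.C]
  apply Finset.sum_congr rfl
  intro σ _
  rw [hps σ]

lemma rec_h {r : ℕ} (e : ℕ → MvPolynomial (Fin r) ℚ) (he0 : e 0 = 1)
    (h : ℤ → MvPolynomial (Fin r) ℚ)
    (hconv : ∀ n : ℤ, ∑ i ∈ Finset.range (r + 1),
        (-1 : MvPolynomial (Fin r) ℚ) ^ i * e i * h (n - (i : ℤ)) = if n = 0 then 1 else 0)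
    (m : ℤ) (hm : -(r:ℤ) < m) :
    ∑ k ∈ Finset.range r, (-1 : MvPolynomial (Fin r) ℚ)^(r - k + 1) * e (r - k) * h (m + (k:ℤ))
      = h (m + r) := by
  have H := hconv (m + r)
  rw [if_neg (by omega), Finset.sum_range_succ'] at H
  push_cast at H
  simp only [pow_zero, he0, mul_one, one_mul, sub_zero] at H
  rw [← Finset.sum_range_reflect]
  have hcongr : ∀ i ∈ Finset.range r,
      (-1 : MvPolynomial (Fin r) ℚ)^(r - (r - 1 - i) + 1) * e (r - (r-1-i)) * h (m + ((r-1-i : ℕ):ℤ))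
        = -((-1 : MvPolynomial (Fin r) ℚ)^(i+1) * e (i+1) * h (m + (r:ℤ) - ((i:ℕ)+1))) := by
    intro i hi
    rw [Finset.mem_range] at hi
    have e1 : r - (r-1-i) = i+1 := by omega
    have e2 : m + ((r-1-i : ℕ):ℤ) = m + (r:ℤ) - ((i:ℕ)+1) := by omega
    rw [e1, e2, pow_succ]
    ring
  rw [Finset.sum_congr rfl hcongr, Finset.sum_neg_distrib]
  linear_combination -H

lemma key_row {r : ℕ} (e : ℕ → MvPolynomial (Fin r) ℚ) (he0 : e 0 = 1)
    (h : ℤ → MvPolynomial (Fin r) ℚ)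
    (hconv : ∀ n : ℤ, ∑ i ∈ Finset.range (r + 1),
        (-1 : MvPolynomial (Fin r) ℚ) ^ i * e i * h (n - (i : ℤ)) = if n = 0 then 1 else 0)
    (i : Fin r) (m : ℤ) (hm : -(r:ℤ) < m) :
    ∑ k : Fin r, compMat e r i k * Polynomial.C (h (m + ((k:ℕ):ℤ)))
      = Polynomial.C (h (m + ((i:ℕ):ℤ))) + Polynomial.X * Polynomial.C (h (m + ((i:ℕ):ℤ) + 1)) := by
  have hsplit : ∀ k : Fin r, compMat e r i k * Polynomial.C (h (m + ((k:ℕ):ℤ)))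
      = (if k = i then Polynomial.C (h (m + ((k:ℕ):ℤ))) else 0)
        + Polynomial.X * ((if (i : ℕ) + 1 = r then
            (-1 : Polynomial (MvPolynomial (Fin r) ℚ)) ^ (r - (k : ℕ) + 1) *
              Polynomial.C (e (r - (k : ℕ)))
          else if (k : ℕ) = (i : ℕ) + 1 then 1 else 0) * Polynomial.C (h (m + ((k:ℕ):ℤ)))) := by
    intro k
    simp only [compMat, Matrix.of_apply, Fin.val_eq_val]
    rw [add_mul, ite_mul, one_mul, zero_mul, mul_assoc]
  rw [Finset.sum_congr rfl (fun k _ => hsplit k), Finset.sum_add_distrib,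
    Finset.sum_ite_eq' Finset.univ i, if_pos (Finset.mem_univ i), ← Finset.mul_sum]
  rw [add_right_inj]
  by_cases hi : (i : ℕ) + 1 = r
  · simp only [if_pos hi]
    have hstep : ∀ k : Fin r,
        (-1 : Polynomial (MvPolynomial (Fin r) ℚ)) ^ (r - (k : ℕ) + 1) *
            Polynomial.C (e (r - (k : ℕ))) * Polynomial.C (h (m + ((k:ℕ):ℤ)))
          = Polynomial.C ((-1 : MvPolynomial (Fin r) ℚ) ^ (r - (k:ℕ) + 1) * e (r - (k:ℕ)) *
              h (m + ((k:ℕ):ℤ))) := by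
      intro k
      rw [_root_.map_mul, _root_.map_mul, map_pow, Polynomial.C_neg, Polynomial.C_1]
    rw [Finset.sum_congr rfl (fun k _ => hstep k), ← map_sum Polynomial.C,
      Fin.sum_univ_eq_sum_range (fun k => (-1 : MvPolynomial (Fin r) ℚ) ^ (r - k + 1) * e (r - k) *
        h (m + (k:ℤ))) r, rec_h e he0 h hconv m hm]
    have harg : m + (r:ℤ) = m + ((i:ℕ):ℤ) + 1 := by omega
    rw [harg]
  · simp only [if_neg hi]
    have hi2 : (i : ℕ) + 1 < r := by have := i.isLt; omega
    have hcond : ∀ k : Fin r, ((k:ℕ) = (i:ℕ) + 1) ↔ k = (⟨(i:ℕ)+1, hi2⟩ : Fin r) := by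
      intro k; rw [Fin.ext_iff]
    have hstep : ∀ k : Fin r,
        (if (k : ℕ) = (i : ℕ) + 1 then (1:Polynomial (MvPolynomial (Fin r) ℚ)) else 0) *
            Polynomial.C (h (m + ((k:ℕ):ℤ)))
          = if k = (⟨(i:ℕ)+1, hi2⟩ : Fin r) then Polynomial.C (h (m + ((k:ℕ):ℤ))) else 0 := by
      intro k
      rw [ite_mul, one_mul, zero_mul]
      simp only [hcond]
    rw [Finset.sum_congr rfl (fun k _ => hstep k),
      Finset.sum_ite_eq' Finset.univ (⟨(i:ℕ)+1, hi2⟩ : Fin r), if_pos (Finset.mem_univ _)]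
    have harg : m + ((((⟨(i:ℕ)+1, hi2⟩ : Fin r) : Fin r):ℕ):ℤ) = m + ((i:ℕ):ℤ) + 1 := by
      simp
      omega
    rw [harg]

theorem stmt_14 (r : ℕ) (hr : 1 ≤ r)
    (e : ℕ → MvPolynomial (Fin r) ℚ)
    (he0 : e 0 = 1)
    (heX : ∀ i : Fin r, e ((i : ℕ) + 1) = MvPolynomial.X i)
    (heTop : ∀ i : ℕ, r < i → e i = 0)
    (h : ℤ → MvPolynomial (Fin r) ℚ)
    (hhneg : ∀ n : ℤ, n < 0 → h n = 0)
    (hconv : ∀ n : ℤ,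
      ∑ i ∈ Finset.range (r + 1),
          (-1 : MvPolynomial (Fin r) ℚ) ^ i * e i * h (n - (i : ℤ)) =
        if n = 0 then 1 else 0)
    : ∀ j : ℕ, j ≤ r → ∀ lam : Fin r → ℕ, Antitone lam →
      e j * schurDet h (fun k => (lam k : ℤ)) = stripSumAdd h lam j := by
  classical
  intro j hj lam hlam
  set u : Fin r → Fin r → MvPolynomial (Fin r) ℚ :=
    fun i c => h ((lam c : ℤ) - ((c:ℕ):ℤ) + ((i:ℕ):ℤ)) with hu
  set v : Fin r → Fin r → MvPolynomial (Fin r) ℚ :=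
    fun i c => h ((lam c : ℤ) - ((c:ℕ):ℤ) + ((i:ℕ):ℤ) + 1) with hv
  set V : Matrix (Fin r) (Fin r) (MvPolynomial (Fin r) ℚ) := Matrix.of u with hV
  -- the key matrix factorization
  have hWAV : (Matrix.of fun i c : Fin r => Polynomial.C (u i c) + Polynomial.X * Polynomial.C (v i c))
      = compMat e r * (Polynomial.C : MvPolynomial (Fin r) ℚ →+* _).mapMatrix V := by
    refine Matrix.ext fun i c => ?_
    rw [Matrix.mul_apply]
    have hkr := key_row e he0 h hconv i ((lam c : ℤ) - ((c:ℕ):ℤ))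
      (by have := c.isLt; omega)
    simp only [Matrix.of_apply, RingHom.mapMatrix_apply, Matrix.map_apply, hu, hv, hV]
    exact hkr.symm
  have hdetW : Matrix.det (Matrix.of fun i c : Fin r =>
        Polynomial.C (u i c) + Polynomial.X * Polynomial.C (v i c))
      = (compMat e r).det * Polynomial.C V.det := by
    rw [hWAV, Matrix.det_mul, ← RingHom.map_det]
  -- LHS : coefficient extraction
  have hdV : schurDet h (fun k => (lam k : ℤ)) = V.det := rfl
  have hLHS : ((compMat e r).det * Polynomial.C V.det).coeff j = e j * V.det := by
    rw [det_compMat e r, Finset.sum_mul]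
    have hterm : ∀ m ∈ Finset.range (r+1),
        (Polynomial.C (if m = 0 then 1 else e m) * Polynomial.X ^ m * Polynomial.C V.det).coeff j
          = if j = m then (if m = 0 then 1 else e m) * V.det else 0 := by
      intro m _
      rw [show Polynomial.C (if m = 0 then 1 else e m) * Polynomial.X ^ m * Polynomial.C V.det
          = Polynomial.C ((if m = 0 then 1 else e m) * V.det) * Polynomial.X ^ m by
        rw [_root_.map_mul]; ring]
      rw [Polynomial.coeff_C_mul, Polynomial.coeff_X_pow, mul_ite, mul_one, mul_zero]
    rw [Polynomial.finset_sum_coeff, Finset.sum_congr rfl hterm, Finset.sum_ite_eq,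
      if_pos (Finset.mem_range.2 (by omega))]
    by_cases hj0 : j = 0 <;> simp [hj0, he0]
  -- RHS : coefficient extraction via subset expansion
  have hRHS : (Matrix.det (Matrix.of fun i c : Fin r =>
        Polynomial.C (u i c) + Polynomial.X * Polynomial.C (v i c))).coeff j
      = stripSumAdd h lam j := by
    rw [det_add_X, Polynomial.finset_sum_coeff]
    have hterm : ∀ t ∈ (Finset.univ : Finset (Fin r)).powerset,
        (Polynomial.X ^ t.card *
            Polynomial.C (Matrix.det (Matrix.of fun i c => if c ∈ t then v i c else u i c))).coeff j
          = if t.card = j then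
              schurDet h (fun c => (lam c : ℤ) + (if c ∈ t then 1 else 0)) else 0 := by
      intro t _
      have hmix : Matrix.det (Matrix.of fun i c => if c ∈ t then v i c else u i c)
          = schurDet h (fun c => (lam c : ℤ) + (if c ∈ t then 1 else 0)) := by
        unfold schurDet
        congr 1
        refine Matrix.ext fun i c => ?_
        by_cases hc : c ∈ t
        · simp only [Matrix.of_apply, hc, if_true, hv]
          congr 1
          all_goals (push_cast; ring)
        · simp only [Matrix.of_apply, hc, if_false, hu]
          congr 1
          all_goals (push_cast; ring)
      rw [mul_comm, Polynomial.coeff_C_mul, Polynomial.coeff_X_pow, hmix,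
        mul_ite, mul_one, mul_zero]
      by_cases hcj : t.card = j
      · rw [if_pos hcj, if_pos (by omega)]
      · rw [if_neg hcj, if_neg (by omega)]
    rw [Finset.sum_congr rfl hterm, stripSumAdd_eq h lam hlam j, Finset.powersetCard_eq_filter,
      Finset.sum_filter]
  rw [hdV, ← hLHS, ← hdetW, hRHS]
end

section
/- Let B_∞ = ℚ[h_1, h_2, …] be the polynomial ring over ℚ in countably many algebraically independent indeterminates h_n (n ≥ 1), with the conventions h_0 = 1 and h_n = 0 for n < 0, and let v be an indeterminate. Let G : B_∞ → B_∞[v] be the unique ℚ-algebra homomorphism determined by G(h_n) = h_n − v·h_{n−1} for all n ≥ 1. Then for every partition λ = (λ_1 ≥ … ≥ λ_k) of length k, G(Δ_λ(H)) = Σ_{j=0}^{k} (−1)^j v^j Δ_{λ−j}(H), where Δ_λ(H) := det(h_{λ_j − j + i})_{1≤i,j≤k} and Δ_{λ−j}(H) is the sum of Δ_μ(H) over all partitions μ = (λ_1 − i_1, …, λ_k − i_k) with each i_m ∈ {0,1}, Σ i_m = j, and μ nonincreasing with nonnegative parts. In particular the ℚ[v]-linear extension of the Schur-basis map Δ_λ(H)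 ↦ Σ_j (−1)^j v^j Δ_{λ−j}(H) is a ring homomorphism. -/
lemma schurDet_vanish {R : Type*} [CommRing R] (a : ℤ → R) {k : ℕ} (lam : Fin k → ℕ)
    (hlam : Antitone lam) (S : Finset (Fin k))
    (hfail : ¬ ∀ p q : Fin k, p ≤ q →
      ((lam q : ℤ) - (if q ∈ S then 1 else 0)) ≤ ((lam p : ℤ) - (if p ∈ S then 1 else 0))) :
    schurDet a (fun m => (lam m : ℤ) - (if m ∈ S then 1 else 0)) = 0 := by
  classical
  set mu : Fin k → ℤ := fun m => (lam m : ℤ) - (if m ∈ S then 1 else 0) with hmu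
  have hA : ¬ Antitone mu := fun hA => hfail fun p q hpq => hA hpq
  cases k with
  | zero => exact absurd (fun p q _ => p.elim0) hfail
  | succ n =>
    rw [Fin.antitone_iff_succ_le] at hA
    push_neg at hA
    obtain ⟨i, hi⟩ := hA
    have hle : lam i.succ ≤ lam i.castSucc := hlam (Fin.castSucc_lt_succ (i := i)).le
    have e2 : mu i.succ = mu i.castSucc + 1 := by
      simp only [hmu] at hi ⊢
      split_ifs at hi ⊢ <;> omega
    apply Matrix.det_zero_of_column_eq (i := i.castSucc) (j := i.succ)
      (Fin.castSucc_lt_succ (i := i)).ne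
    intro p
    simp only [Matrix.of_apply]
    congr 1
    have : ((i.succ : ℕ) : ℤ) = ((i.castSucc : ℕ) : ℤ) + 1 := by
      simp [Fin.val_succ, Fin.coe_castSucc]
    rw [e2, this]
    ring

theorem stmt_19
    (h : ℤ → MvPolynomial ℕ+ ℚ)
    (hneg : ∀ n : ℤ, n < 0 → h n = 0)
    (h0 : h 0 = 1)
    (hX : ∀ i : ℕ+, h ((i : ℕ) : ℤ) = MvPolynomial.X i)
    (G : MvPolynomial ℕ+ ℚ →ₐ[ℚ] Polynomial (MvPolynomial ℕ+ ℚ))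
    (hG : ∀ n : ℕ+, G (MvPolynomial.X n) =
      Polynomial.C (h ((n : ℕ) : ℤ)) - Polynomial.X * Polynomial.C (h (((n : ℕ) : ℤ) - 1)))
    (k : ℕ) (lam : Fin k → ℕ) (hlam : Antitone lam) (hpos : ∀ m : Fin k, 0 < lam m) :
    G (schurDet h (fun m => (lam m : ℤ))) =
      ∑ j ∈ Finset.range (k + 1),
        (-1 : Polynomial (MvPolynomial ℕ+ ℚ)) ^ j * Polynomial.X ^ j *
          Polynomial.C (stripSumSub h lam j) := by
  classical
  have hGh : ∀ n : ℤ, G (h n) = Polynomial.C (h n) - Polynomial.X * Polynomial.C (h (n-1)) := by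
    intro n
    rcases lt_trichotomy n 0 with hn | hn | hn
    · rw [hneg n hn, hneg (n-1) (by omega), map_zero]; simp
    · subst hn
      rw [h0, map_one, (by norm_num : (0:ℤ) - 1 = -1), hneg (-1) (by norm_num)]
      simp
    · lift n to ℕ using hn.le with m
      have hm : 0 < m := by exact_mod_cast hn
      have e1 := hX ⟨m, hm⟩
      have e2 := hG ⟨m, hm⟩
      simp only [PNat.mk_coe] at e1 e2
      rw [e1, e2, e1]
  set u : Fin k → Fin k → Polynomial (MvPolynomial ℕ+ ℚ) :=
    fun j i => Polynomial.C (h ((lam j : ℤ) - j + i)) with hu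
  set w : Fin k → Fin k → Polynomial (MvPolynomial ℕ+ ℚ) :=
    fun j i => -(Polynomial.X * Polynomial.C (h ((lam j : ℤ) - j + i - 1))) with hw
  have step1 : G (schurDet h (fun m => (lam m : ℤ))) = Matrix.det ((Matrix.of (u + w)).transpose) := by
    rw [schurDet, AlgHom.map_det]
    congr 1
    ext i j
    simp only [AlgHom.mapMatrix_apply, Matrix.map_apply, Matrix.of_apply, Matrix.transpose_apply,
      Pi.add_apply]
    rw [hGh]
    simp [hu, hw, sub_eq_add_neg]
  rw [step1, Matrix.det_transpose]
  have step2 : (Matrix.of (u + w)).det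
      = ∑ s : Finset (Fin k), (Matrix.of (s.piecewise u w)).det :=
    MultilinearMap.map_add_univ
      (Matrix.detRowAlternating (n := Fin k)
        (R := Polynomial (MvPolynomial ℕ+ ℚ))).toMultilinearMap u w
  rw [step2]
  have step3 : ∀ s : Finset (Fin k),
      (Matrix.of (s.piecewise u w)).det
      = (-Polynomial.X) ^ (sᶜ.card) *
        Polynomial.C (schurDet h (fun j => (lam j : ℤ) - (if j ∈ s then 0 else 1))) := by
    intro s
    have hrow : s.piecewise u w = fun j =>
        (if j ∈ sᶜ then -Polynomial.X else 1 : Polynomial (MvPolynomial ℕ+ ℚ)) •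
        (fun i : Fin k =>
          Polynomial.C (h (((lam j : ℤ) - (if j ∈ s then 0 else 1)) - j + i))) := by
      funext j
      by_cases hj : j ∈ s
      · simp [Finset.piecewise, hj, hu]
      · funext i
        have h1 : s.piecewise u w j i
            = -(Polynomial.X * Polynomial.C (h ((lam j : ℤ) - j + i - 1))) := by
          rw [Finset.piecewise_eq_of_notMem _ _ _ hj]
        have h2 : (lam j : ℤ) - j + i - 1 = ((lam j : ℤ) - (if j ∈ s then 0 else 1)) - j + i := by
          rw [if_neg hj]; ring
        rw [h1, h2, if_pos (Finset.mem_compl.mpr hj)]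
        simp only [Pi.smul_apply, smul_eq_mul]
        exact (neg_mul Polynomial.X (Polynomial.C (h (((lam j : ℤ) - (if j ∈ s then 0 else 1)) - j + i)))).symm
    have hsmul := MultilinearMap.map_smul_univ
      (Matrix.detRowAlternating (n := Fin k)
        (R := Polynomial (MvPolynomial ℕ+ ℚ))).toMultilinearMap
      (fun j => if j ∈ sᶜ then -Polynomial.X else 1)
      (fun j i => Polynomial.C (h (((lam j : ℤ) - (if j ∈ s then 0 else 1)) - j + i)))
    rw [hrow]
    rw [show ((Matrix.of (fun j => (if j ∈ sᶜ then -Polynomial.X else 1) •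
        (fun i : Fin k =>
          Polynomial.C (h (((lam j : ℤ) - (if j ∈ s then 0 else 1)) - j + i))))).det) = _ from by unfold Matrix.det; exact hsmul]
    rw [Fintype.prod_ite_mem sᶜ (fun _ => -Polynomial.X), Finset.prod_const, smul_eq_mul]
    congr 1
    rw [schurDet, RingHom.map_det, ← Matrix.det_transpose]
    rfl
  simp only [step3]
  have step4 : ∑ s : Finset (Fin k), (-Polynomial.X) ^ (sᶜ.card) *
        Polynomial.C (schurDet h (fun j => (lam j : ℤ) - (if j ∈ s then 0 else 1)))
      = ∑ t : Finset (Fin k), (-Polynomial.X) ^ (t.card) *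
        Polynomial.C (schurDet h (fun j => (lam j : ℤ) - (if j ∈ t then 1 else 0))) := by
    apply Fintype.sum_equiv (Equiv.mk compl compl compl_compl compl_compl)
    intro s
    simp only [Equiv.coe_fn_mk]
    have : (fun j => (lam j : ℤ) - if j ∈ s then 0 else 1)
         = (fun j => (lam j : ℤ) - if j ∈ sᶜ then 1 else 0) := by
      funext j; by_cases hj : j ∈ s <;> simp [hj]
    rw [this]
  rw [step4, ← Finset.powerset_univ, Finset.sum_powerset, Finset.card_univ, Fintype.card_fin]
  apply Finset.sum_congr rfl
  intro j hj
  simp only [stripSumSub, map_sum]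
  rw [Finset.mul_sum]
  apply Finset.sum_congr rfl
  intro t ht
  rw [(Finset.mem_powersetCard.mp ht).2, apply_ite Polynomial.C, map_zero]
  split_ifs with hc
  · rw [show (-Polynomial.X : Polynomial (MvPolynomial ℕ+ ℚ)) = (-1) * Polynomial.X by ring,
      mul_pow]
  · have hB : ∀ q : Fin k, (0:ℤ) ≤ (lam q : ℤ) - (if q ∈ t then 1 else 0) := by
      intro q
      have h1 : 1 ≤ lam q := hpos q
      split_ifs <;> omega
    have hA : ¬ ∀ p q : Fin k, p ≤ q →
        ((lam q : ℤ) - (if q ∈ t then 1 else 0)) ≤ ((lam p : ℤ) - (if p ∈ t then 1 else 0)) :=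
      fun hA' => hc ⟨hA', hB⟩
    rw [schurDet_vanish h lam hlam t hA, map_zero, mul_zero, mul_zero]
end
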